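/- arXiv:2412.15839 — 16 statements merged into one kernel-verified Lean document; each statement's English description precedes it below -/
import Mathlib

section
/- Let (X, ▷) be a shelf, i.e. a set with a binary operation satisfying a ▷ (b ▷ c) = (a ▷ b) ▷ (a ▷ c) for all a, b, c ∈ X. Let I be an index set and for all i, j ∈ I let α_{ij} : X → X be maps such that α_{ih}(a) ▷ α_{jh}(b) = α_{jh}(α_{ij}(a) ▷ b) for all a, b ∈ X and i, j, h ∈ I. Define a ▷_{ij} b := α_{ij}(a) ▷ b. Then the family (▷_{ij}) satisfies the parametric self-distributivity law a ▷_{ik} (b ▷_{jk} c) = (a ▷_{ij} b) ▷_{jk} (a ▷_{ik} c) for all a, b, c ∈ X and i, j, k ∈ I; moreover, if every left translation b ↦ a ▷ b of (X, ▷) is bijective (i.e. (X, ▷) is a rack), then every left translation b ↦ a ▷_{ij} b is bijective. -/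
/-- A shelf `(X, ▷)` together with maps `α_{ij} : X → X` satisfying
`α_{ih}(a) ▷ α_{jh}(b) = α_{jh}(α_{ij}(a) ▷ b)` yields a p-shelf via
`a ▷_{ij} b := α_{ij}(a) ▷ b`; if moreover `(X, ▷)` is a rack, the resulting
family is a p-rack. -/
theorem shelf_to_pShelf {X I : Type*} (op : X → X → X)
    (hshelf : ∀ a b c : X, op a (op b c) = op (op a b) (op a c))
    (α : I → I → X → X)
    (hcond : ∀ (a b : X) (i j h : I), op (α i h a) (α j h b) = α j h (op (α i j a) b)) :
    (∀ (a b c : X) (i j k : I),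
        op (α i k a) (op (α j k b) c)
          = op (α j k (op (α i j a) b)) (op (α i k a) c))
      ∧ ((∀ a : X, Function.Bijective (op a)) →
          ∀ (a : X) (i j : I), Function.Bijective fun b => op (α i j a) b) := by
  constructor
  · intro a b c i j k
    rw [hshelf, hcond]
  · intro h a i j
    exact h (α i j a)
end

section
/- Let X be a nonempty set, I an index set, and for each pair (i,j) ∈ I × I let ▷_{ij} : X × X → X be a binary operation. Define R^{ij} : X × X → X × X by R^{ij}(b, a) = (b, b ▷_{ij} a). Then R^{ij} is a solution of the parametric set-theoretic Yang–Baxter equation (necessarily left non-degenerate, since its first component map is the identity) if and only if (X, ▷_{ij}) is a p-shelf. Moreover, R^{ij} is bijective and non-degenerate (i.e. the maps a ↦ b ▷_{ij} a are bijective) if and only if (X, ▷_{ij}) is a p-rack. -/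
namespace Stmt1

variable {X P : Type*}

/-- `R_{12}` acting on the first two factors of `X × X × X`, where
`R^{ij}(b,a) = (σ^{ij}_a(b), τ^{ij}_b(a))`. -/
def R12 (σ τ : P → P → X → X → X) (i j : P) : X × X × X → X × X × X :=
  fun p => (σ i j p.2.1 p.1, τ i j p.1 p.2.1, p.2.2)

def R13 (σ τ : P → P → X → X → X) (i j : P) : X × X × X → X × X × X :=
  fun p => (σ i j p.2.2 p.1, p.2.1, τ i j p.1 p.2.2)

def R23 (σ τ : P → P → X → X → X) (i j : P) : X × X × X → X × X × X :=
  fun p => (p.1, σ i j p.2.2 p.2.1, τ i j p.2.1 p.2.2)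

/-- The parametric set-theoretic Yang–Baxter equation. -/
def IsYB (σ τ : P → P → X → X → X) : Prop :=
  ∀ i j k : P,
    R12 σ τ i j ∘ R13 σ τ i k ∘ R23 σ τ j k
      = R23 σ τ j k ∘ R13 σ τ i k ∘ R12 σ τ i j

/-- The map `R^{ij} : X × X → X × X`, `R^{ij}(b, a) = (σ^{ij}_a(b), τ^{ij}_b(a))`. -/
def Rm (σ τ : P → P → X → X → X) (i j : P) : X × X → X × X :=
  fun p => (σ i j p.2 p.1, τ i j p.1 p.2)

/-- The parametric self-distributivity law defining p-shelves,
with `d i j a b = a ▷_{ij} b`. -/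
def IsPShelf (d : P → P → X → X → X) : Prop :=
  ∀ (i j k : P) (a b c : X), d i k a (d j k b c) = d j k (d i j a b) (d i k a c)

/-- `R^{ij}(b,a) = (b, b ▷_{ij} a)` is a solution of the parametric
set-theoretic Yang–Baxter equation iff `(X, ▷_{ij})` is a p-shelf; and it is a
bijective, non-degenerate solution iff `(X, ▷_{ij})` is a p-rack. -/
theorem pShelf_solution_iff {X I : Type*} [Nonempty X] (d : I → I → X → X → X) :
    (IsYB (fun _ _ _ b => b) d ↔ IsPShelf d)
    ∧ ((IsYB (fun _ _ _ b => b) d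
          ∧ (∀ i j : I, Function.Bijective (Rm (fun _ _ _ b => b) d i j))
          ∧ (∀ (i j : I) (b : X), Function.Bijective (d i j b)))
        ↔ (IsPShelf d ∧ ∀ (i j : I) (b : X), Function.Bijective (d i j b))) := by
  have hmain : IsYB (fun _ _ _ b => b) d ↔ IsPShelf d := by
    constructor
    · intro h i j k a b c
      have := congrFun (h i j k) (a, b, c)
      simpa [R12, R13, R23, Function.comp, Prod.ext_iff] using this
    · intro h i j k
      funext p
      simp [R12, R13, R23, Function.comp, h i j k]
  refine ⟨hmain, ?_, ?_⟩
  · rintro ⟨hy, _, hd⟩; exact ⟨hmain.1 hy, hd⟩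
  · rintro ⟨hs, hd⟩
    refine ⟨hmain.2 hs, ?_, hd⟩
    intro i j
    constructor
    · rintro ⟨b, a⟩ ⟨b', a'⟩ h
      simp only [Rm, Prod.mk.injEq] at h
      obtain ⟨h1, h2⟩ := h
      subst h1
      exact Prod.ext rfl ((hd i j b).1 h2)
    · rintro ⟨b, c⟩
      obtain ⟨a, ha⟩ := (hd i j b).2 c
      exact ⟨(b, a), by simp [Rm, ha]⟩

end Stmt1
end

section
/- Let (X, ▷_{ij}) be a p-shelf indexed by pairs of elements of a set Y, let μ : Y → Y be an involutive map (write z̄ = μ(z)), let R^{ij}(b, a) = (b, b ▷_{ij} a) be the associated p-shelf solution of the parametric Yang–Baxter equation, and for each z ∈ Y let K^{z} : X → X, a ↦ κ^{z}(a). Then K^{z} is a parametric reflection for R if and only if, for all a, b ∈ X and z_i, z_j ∈ Y: (i) (κ^{z_i}(b ▷_{z̄_j z̄_i} a)) ▷_{z_i z_j} κ^{z_j}(b) = κ^{z_j}((κ^{z_i}(b ▷_{z̄_j z̄_i} a)) ▷_{z_i z̄_j} b), and (ii) κ^{z_i}((κ^{z_j}(b)) ▷_{z_j z̄_i} a) =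 κ^{z_i}(b ▷_{z̄_j z̄_i} a). -/
namespace Stmt3

variable {X P : Type*}

/-- The map `R^{ij} : X × X → X × X`, `R^{ij}(b, a) = (σ^{ij}_a(b), τ^{ij}_b(a))`. -/
def Rm (σ τ : P → P → X → X → X) (i j : P) : X × X → X × X :=
  fun p => (σ i j p.2 p.1, τ i j p.1 p.2)

/-- `R_{21}^{ij} = π ∘ R^{ij} ∘ π` where `π` is the flip. -/
def R21 (σ τ : P → P → X → X → X) (i j : P) : X × X → X × X :=
  Prod.swap ∘ Rm σ τ i j ∘ Prod.swap

/-- `K_1^{z}(a,b) = (κ^{z}(a), b)`. -/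
def K1 (κ : P → X → X) (z : P) : X × X → X × X := fun p => (κ z p.1, p.2)

/-- `K_2^{z}(a,b) = (a, κ^{z}(b))`. -/
def K2 (κ : P → X → X) (z : P) : X × X → X × X := fun p => (p.1, κ z p.2)

/-- The parametric set-theoretic reflection equation for `K^z` with respect to
the solution `R` and the involution `μ`. -/
def IsReflection (σ τ : P → P → X → X → X) (μ : P → P) (κ : P → X → X) : Prop :=
  ∀ z1 z2 : P,
    Rm σ τ z1 z2 ∘ K1 κ z1 ∘ R21 σ τ z2 (μ z1) ∘ K2 κ z2
      = K2 κ z2 ∘ Rm σ τ z1 (μ z2) ∘ K1 κ z1 ∘ R21 σ τ (μ z2) (μ z1)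

/-- The parametric self-distributivity law defining p-shelves,
with `d i j a b = a ▷_{ij} b`. -/
def IsPShelf (d : P → P → X → X → X) : Prop :=
  ∀ (i j k : P) (a b c : X), d i k a (d j k b c) = d j k (d i j a b) (d i k a c)

/-- for a p-shelf solution `R^{ij}(b,a) = (b, b ▷_{ij} a)`,
a family of maps `K^z = κ^z` is a parametric reflection iff conditions (i)
and (ii) hold. -/
theorem pShelf_reflection_iff {X Y : Type*} (d : Y → Y → X → X → X)
    (hshelf : IsPShelf d) (μ : Y → Y) (hμ : ∀ z, μ (μ z) = z) (κ : Y → X → X) :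
    IsReflection (fun _ _ (_ : X) b => b) d μ κ ↔
      ∀ (a b : X) (zi zj : Y),
        (d zi zj (κ zi (d (μ zj) (μ zi) b a)) (κ zj b)
            = κ zj (d zi (μ zj) (κ zi (d (μ zj) (μ zi) b a)) b))
        ∧ (κ zi (d zj (μ zi) (κ zj b) a) = κ zi (d (μ zj) (μ zi) b a)) := by
  constructor
  · intro h a b zi zj
    have := congrFun (h zi zj) (a, b)
    simp only [IsReflection, Rm, R21, K1, K2, Function.comp, Prod.swap, Prod.mk.injEq] at this
    obtain ⟨h1, h2⟩ := this
    refine ⟨?_, h1⟩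
    rw [← h1] at h2 ⊢
    exact h2
  · intro h z1 z2
    funext p
    obtain ⟨a, b⟩ := p
    obtain ⟨h1, h2⟩ := h a b z1 z2
    simp only [Rm, R21, K1, K2, Function.comp, Prod.swap, Prod.mk.injEq]
    exact ⟨h2, by rw [h2]; exact h1⟩

end Stmt3
end

section
/- Let (X, ▷_{ij}) be a p-shelf indexed by pairs of elements of a set Y, let μ : Y → Y be an involutive map (write z̄ = μ(z)), let R^{ij}(b, a) = (b, b ▷_{ij} a) be the associated p-shelf solution of the parametric Yang–Baxter equation, and for each z ∈ Y let K^{z} : X → X, a ↦ κ^{z}(a), be a bijective map. Then K^{z} is a parametric reflection for R if and only if, for all a, b ∈ X and z_i, z_j ∈ Y: (i) (b ▷_{z̄_j z_i} a) ▷_{z_i z_j} κ^{z_j}(b) = κ^{z_j}((b ▷_{z̄_j z_i} a) ▷_{z_i z̄_j} b), and (ii) κ^{z_i}(a) ▷_{z_i z_j} b = a ▷_{z̄_i z_j} b. -/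
namespace Stmt4

variable {X P : Type*}

/-- The map `R^{ij} : X × X → X × X`, `R^{ij}(b, a) = (σ^{ij}_a(b), τ^{ij}_b(a))`. -/
def Rm (σ τ : P → P → X → X → X) (i j : P) : X × X → X × X :=
  fun p => (σ i j p.2 p.1, τ i j p.1 p.2)

/-- `R_{21}^{ij} = π ∘ R^{ij} ∘ π` where `π` is the flip. -/
def R21 (σ τ : P → P → X → X → X) (i j : P) : X × X → X × X :=
  Prod.swap ∘ Rm σ τ i j ∘ Prod.swap

/-- `K_1^{z}(a,b) = (κ^{z}(a), b)`. -/
def K1 (κ : P → X → X) (z : P) : X × X → X × X := fun p => (κ z p.1, p.2)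

/-- `K_2^{z}(a,b) = (a, κ^{z}(b))`. -/
def K2 (κ : P → X → X) (z : P) : X × X → X × X := fun p => (p.1, κ z p.2)

/-- The parametric set-theoretic reflection equation for `K^z` with respect to
the solution `R` and the involution `μ`. -/
def IsReflection (σ τ : P → P → X → X → X) (μ : P → P) (κ : P → X → X) : Prop :=
  ∀ z1 z2 : P,
    Rm σ τ z1 z2 ∘ K1 κ z1 ∘ R21 σ τ z2 (μ z1) ∘ K2 κ z2
      = K2 κ z2 ∘ Rm σ τ z1 (μ z2) ∘ K1 κ z1 ∘ R21 σ τ (μ z2) (μ z1)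

/-- The parametric self-distributivity law defining p-shelves,
with `d i j a b = a ▷_{ij} b`. -/
def IsPShelf (d : P → P → X → X → X) : Prop :=
  ∀ (i j k : P) (a b c : X), d i k a (d j k b c) = d j k (d i j a b) (d i k a c)

/-- Pointwise form of the reflection equation for the p-shelf solution. -/
lemma refl_pointwise {X Y : Type*} (d : Y → Y → X → X → X) (μ : Y → Y) (κ : Y → X → X) :
    IsReflection (fun _ _ (_ : X) b => b) d μ κ ↔
      ∀ (z1 z2 : Y) (a b : X),
        (κ z1 (d z2 (μ z1) (κ z2 b) a) = κ z1 (d (μ z2) (μ z1) b a)) ∧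
        (d z1 z2 (κ z1 (d z2 (μ z1) (κ z2 b) a)) (κ z2 b)
          = κ z2 (d z1 (μ z2) (κ z1 (d (μ z2) (μ z1) b a)) b)) := by
  constructor
  · intro h z1 z2 a b
    have := congrFun (h z1 z2) (a, b)
    simp only [Rm, R21, K1, K2, Function.comp_apply, Prod.swap, Prod.mk.injEq] at this
    exact this
  · intro h z1 z2
    funext p
    obtain ⟨a, b⟩ := p
    simp only [Rm, R21, K1, K2, Function.comp_apply, Prod.swap, Prod.mk.injEq]
    exact h z1 z2 a b

/-- for a p-shelf solution `R^{ij}(b,a) = (b, b ▷_{ij} a)` and a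
bijective family `K^z = κ^z`, `K` is a parametric reflection iff conditions
(i) and (ii) hold. -/
theorem pShelf_bijective_reflection_iff {X Y : Type*} (d : Y → Y → X → X → X)
    (hshelf : IsPShelf d) (μ : Y → Y) (hμ : ∀ z, μ (μ z) = z)
    (κ : Y → X → X) (hκ : ∀ z, Function.Bijective (κ z)) :
    IsReflection (fun _ _ (_ : X) b => b) d μ κ ↔
      ∀ (a b : X) (zi zj : Y),
        (d zi zj (d (μ zj) zi b a) (κ zj b)
            = κ zj (d zi (μ zj) (d (μ zj) zi b a) b))
        ∧ (d zi zj (κ zi a) b = d (μ zi) zj a b) := by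
  rw [refl_pointwise]
  constructor
  · intro h a b zi zj
    have hii : ∀ (z1 z2 : Y) (a b : X), d z2 (μ z1) (κ z2 b) a = d (μ z2) (μ z1) b a :=
      fun z1 z2 a b => (hκ z1).injective (h z1 z2 a b).1
    have hii' : ∀ (zi zj : Y) (a b : X), d zi zj (κ zi a) b = d (μ zi) zj a b := by
      intro zi zj a b
      have := hii (μ zj) zi b a
      rwa [hμ] at this
    refine ⟨?_, hii' zi zj a b⟩
    have h2 := (h (μ zi) zj a b).2
    rw [hμ] at h2
    have e1 : d zj zi (κ zj b) a = d (μ zj) zi b a := by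
      have := hii (μ zi) zj a b; rwa [hμ] at this
    have e2 : d (μ zi) zj (κ (μ zi) (d (μ zj) zi b a)) (κ zj b)
        = d zi zj (d (μ zj) zi b a) (κ zj b) := by
      have := hii' (μ zi) zj (d (μ zj) zi b a) (κ zj b); rwa [hμ] at this
    have e3 : d (μ zi) (μ zj) (κ (μ zi) (d (μ zj) zi b a)) b
        = d zi (μ zj) (d (μ zj) zi b a) b := by
      have := hii' (μ zi) (μ zj) (d (μ zj) zi b a) b; rwa [hμ] at this
    rw [e1, e2, e3] at h2
    exact h2
  · intro h z1 z2 a b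
    have hii := fun (a b : X) (zi zj : Y) => (h a b zi zj).2
    have e1 : d z2 (μ z1) (κ z2 b) a = d (μ z2) (μ z1) b a := hii b a z2 (μ z1)
    constructor
    · rw [e1]
    · rw [e1, hii (d (μ z2) (μ z1) b a) (κ z2 b) z1 z2,
        hii (d (μ z2) (μ z1) b a) b z1 (μ z2)]
      exact (h a b (μ z1) z2).1

end Stmt4
end

section
/- Let (X, ▷_{ij}) be a p-rack indexed by pairs of elements of a set Y, let μ : Y → Y be an involutive map (write z̄ = μ(z)), let R^{ij}(b, a) = (b, b ▷_{ij} a) be the associated p-rack solution of the parametric Yang–Baxter equation, and for each z ∈ Y let K^{z} : X → X, a ↦ κ^{z}(a), be a bijective map. Then K^{z} is a parametric reflection for R if and only if, for all a, b ∈ X and z_i, z_j ∈ Y: (i) a ▷_{z_i z_j} κ^{z_j}(b) = κ^{z_j}(a ▷_{z_i z̄_j} b), and (ii) κ^{z_i}(a) ▷_{z_i z_j} b = a ▷_{z̄_i z_j} b. -/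
namespace Stmt5

variable {X P : Type*}

/-- The map `R^{ij} : X × X → X × X`, `R^{ij}(b, a) = (σ^{ij}_a(b), τ^{ij}_b(a))`. -/
def Rm (σ τ : P → P → X → X → X) (i j : P) : X × X → X × X :=
  fun p => (σ i j p.2 p.1, τ i j p.1 p.2)

/-- `R_{21}^{ij} = π ∘ R^{ij} ∘ π` where `π` is the flip. -/
def R21 (σ τ : P → P → X → X → X) (i j : P) : X × X → X × X :=
  Prod.swap ∘ Rm σ τ i j ∘ Prod.swap

/-- `K_1^{z}(a,b) = (κ^{z}(a), b)`. -/
def K1 (κ : P → X → X) (z : P) : X × X → X × X := fun p => (κ z p.1, p.2)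

/-- `K_2^{z}(a,b) = (a, κ^{z}(b))`. -/
def K2 (κ : P → X → X) (z : P) : X × X → X × X := fun p => (p.1, κ z p.2)

/-- The parametric set-theoretic reflection equation for `K^z` with respect to
the solution `R` and the involution `μ`. -/
def IsReflection (σ τ : P → P → X → X → X) (μ : P → P) (κ : P → X → X) : Prop :=
  ∀ z1 z2 : P,
    Rm σ τ z1 z2 ∘ K1 κ z1 ∘ R21 σ τ z2 (μ z1) ∘ K2 κ z2
      = K2 κ z2 ∘ Rm σ τ z1 (μ z2) ∘ K1 κ z1 ∘ R21 σ τ (μ z2) (μ z1)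

/-- The parametric self-distributivity law defining p-shelves,
with `d i j a b = a ▷_{ij} b`. -/
def IsPShelf (d : P → P → X → X → X) : Prop :=
  ∀ (i j k : P) (a b c : X), d i k a (d j k b c) = d j k (d i j a b) (d i k a c)

/-- for a p-rack solution `R^{ij}(b,a) = (b, b ▷_{ij} a)` and a
bijective family `K^z = κ^z`, `K` is a parametric reflection iff conditions
(i) and (ii) hold. -/
theorem pRack_bijective_reflection_iff {X Y : Type*} (d : Y → Y → X → X → X)
    (hshelf : IsPShelf d) (hrack : ∀ (i j : Y) (a : X), Function.Bijective (d i j a))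
    (μ : Y → Y) (hμ : ∀ z, μ (μ z) = z)
    (κ : Y → X → X) (hκ : ∀ z, Function.Bijective (κ z)) :
    IsReflection (fun _ _ (_ : X) b => b) d μ κ ↔
      ∀ (a b : X) (zi zj : Y),
        (d zi zj a (κ zj b) = κ zj (d zi (μ zj) a b))
        ∧ (d zi zj (κ zi a) b = d (μ zi) zj a b) := by
  constructor
  · intro h
    have key : ∀ (z1 z2 : Y) (a b : X),
        (κ z1 (d z2 (μ z1) (κ z2 b) a),
          d z1 z2 (κ z1 (d z2 (μ z1) (κ z2 b) a)) (κ z2 b))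
        = (κ z1 (d (μ z2) (μ z1) b a),
          κ z2 (d z1 (μ z2) (κ z1 (d (μ z2) (μ z1) b a)) b)) := by
      intro z1 z2 a b
      have := congrFun (h z1 z2) (a, b)
      simpa [Rm, R21, K1, K2, Function.comp] using this
    have hii : ∀ (a b : X) (zi zj : Y), d zi zj (κ zi a) b = d (μ zi) zj a b := by
      intro a b zi zj
      have := congrArg Prod.fst (key (μ zj) zi b a)
      simp only [hμ] at this
      exact (hκ (μ zj)).1 this
    have hi : ∀ (a b : X) (zi zj : Y), d zi zj a (κ zj b) = κ zj (d zi (μ zj) a b) := by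
      intro a b zi zj
      obtain ⟨a0, ha0⟩ := (hrack (μ zj) zi b).2 a
      have h1 := congrArg Prod.fst (key (μ zi) zj a0 b)
      have h2 := congrArg Prod.snd (key (μ zi) zj a0 b)
      simp only [hμ] at h1 h2
      rw [h1] at h2
      rw [hii, hii, ha0] at h2
      simp only [hμ] at h2
      exact h2
    exact fun a b zi zj => ⟨hi a b zi zj, hii a b zi zj⟩
  · intro h z1 z2
    funext p
    obtain ⟨a, b⟩ := p
    have hii : ∀ (a b : X) (zi zj : Y), d zi zj (κ zi a) b = d (μ zi) zj a b :=
      fun a b zi zj => (h a b zi zj).2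
    have hi : ∀ (a b : X) (zi zj : Y), d zi zj a (κ zj b) = κ zj (d zi (μ zj) a b) :=
      fun a b zi zj => (h a b zi zj).1
    have hfst : d z2 (μ z1) (κ z2 b) a = d (μ z2) (μ z1) b a := hii b a z2 (μ z1)
    simp only [Rm, R21, K1, K2, Function.comp, Prod.swap, Prod.mk.injEq]
    refine ⟨congrArg (κ z1) hfst, ?_⟩
    rw [hfst]
    set c := d (μ z2) (μ z1) b a with hc
    calc d z1 z2 (κ z1 c) (κ z2 b) = d (μ z1) z2 c (κ z2 b) := hii c (κ z2 b) z1 z2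
      _ = κ z2 (d (μ z1) (μ z2) c b) := hi c b (μ z1) z2
      _ = κ z2 (d z1 (μ z2) (κ z1 c) b) := by rw [hii c b z1 (μ z2)]

end Stmt5
end

section
/- Let (X, ▷) be a shelf, I an index set with an involutive map i ↦ ī, and for all i, j ∈ I let α_{ij} : X → X be bijective maps satisfying α_{ih}(a) ▷ α_{jh}(b) = α_{jh}(α_{ij}(a) ▷ b) for all a, b ∈ X and i, j, h ∈ I; let (X, ▷_{ij}) be the p-shelf with a ▷_{ij} b := α_{ij}(a) ▷ b and R^{ij}(b,a) = (b, b ▷_{ij} a) the associated solution. Let t_i, κ_i : X → X be bijective maps with κ_i = t_i ∘ α_{īi} for all i ∈ I. Then the maps K_i : X → X, a ↦ κ_i(a), form a bijective parametric reflection for R (with respect to the involution i ↦ ī) if and only if, for all a, b ∈ X and i, j ∈ I: (i) t_i((b ▷ a) ▷ b) = (b ▷ a) ▷ t_i(b), and (ii) α_{īj}(α_{īi}^{-1}(a)) ▷ b = α_{ij}(t_i(a)) ▷ b. -/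
namespace Stmt6

variable {X P : Type*}

/-- The map `R^{ij} : X × X → X × X`, `R^{ij}(b, a) = (σ^{ij}_a(b), τ^{ij}_b(a))`. -/
def Rm (σ τ : P → P → X → X → X) (i j : P) : X × X → X × X :=
  fun p => (σ i j p.2 p.1, τ i j p.1 p.2)

/-- `R_{21}^{ij} = π ∘ R^{ij} ∘ π` where `π` is the flip. -/
def R21 (σ τ : P → P → X → X → X) (i j : P) : X × X → X × X :=
  Prod.swap ∘ Rm σ τ i j ∘ Prod.swap

/-- `K_1^{z}(a,b) = (κ^{z}(a), b)`. -/
def K1 (κ : P → X → X) (z : P) : X × X → X × X := fun p => (κ z p.1, p.2)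

/-- `K_2^{z}(a,b) = (a, κ^{z}(b))`. -/
def K2 (κ : P → X → X) (z : P) : X × X → X × X := fun p => (p.1, κ z p.2)

/-- The parametric set-theoretic reflection equation for `K^z` with respect to
the solution `R` and the involution `μ`. -/
def IsReflection (σ τ : P → P → X → X → X) (μ : P → P) (κ : P → X → X) : Prop :=
  ∀ z1 z2 : P,
    Rm σ τ z1 z2 ∘ K1 κ z1 ∘ R21 σ τ z2 (μ z1) ∘ K2 κ z2
      = K2 κ z2 ∘ Rm σ τ z1 (μ z2) ∘ K1 κ z1 ∘ R21 σ τ (μ z2) (μ z1)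

/-- The parametric self-distributivity law defining p-shelves,
with `d i j a b = a ▷_{ij} b`. -/
def IsPShelf (d : P → P → X → X → X) : Prop :=
  ∀ (i j k : P) (a b c : X), d i k a (d j k b c) = d j k (d i j a b) (d i k a c)

/-- reflections for the p-shelf `a ▷_{ij} b := α_{ij}(a) ▷ b`
built from a shelf `(X, ▷)`: the maps `κ_i = t_i ∘ α_{ī i}` form a bijective
parametric reflection iff conditions (i) and (ii) hold. -/
theorem pShelf_twisted_reflection_iff {X I : Type*} (op : X → X → X)
    (hshelf : ∀ a b c : X, op a (op b c) = op (op a b) (op a c))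
    (inv : I → I) (hinv : ∀ i, inv (inv i) = i)
    (α : I → I → X ≃ X)
    (hcond : ∀ (a b : X) (i j h : I), op (α i h a) (α j h b) = α j h (op (α i j a) b))
    (t : I → X → X) (ht : ∀ i, Function.Bijective (t i)) :
    IsReflection (fun _ _ (_ : X) b => b) (fun i j a b => op (α i j a) b) inv
        (fun i a => t i (α (inv i) i a))
      ↔ ∀ (a b : X) (i j : I),
          (t i (op (op b a) b) = op (op b a) (t i b))
          ∧ (op (α (inv i) j ((α (inv i) i).symm a)) b = op (α i j (t i a)) b) := by
  constructor
  · intro H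
    -- pointwise consequences of the reflection equation
    have hP : ∀ (i j : I) (a b : X),
        (t i (α (inv i) i (op (α j (inv i) (t j (α (inv j) j b))) a)) =
          t i (α (inv i) i (op (α (inv j) (inv i) b) a))) ∧
        (op (α i j (t i (α (inv i) i (op (α j (inv i) (t j (α (inv j) j b))) a))))
            (t j (α (inv j) j b)) =
          t j (α (inv j) j (op (α i (inv j)
            (t i (α (inv i) i (op (α (inv j) (inv i) b) a)))) b))) := by
      intro i j a b
      have e := congrFun (H i j) (a, b)
      simpa only [Rm, R21, K1, K2, Function.comp_apply, Prod.swap_prod_mk,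
        Prod.mk.injEq] using e
    -- condition (ii)
    have hii : ∀ (a b : X) (i j : I),
        op (α (inv i) j ((α (inv i) i).symm a)) b = op (α i j (t i a)) b := by
      intro a b i j
      have e := (hP (inv j) i b ((α (inv i) i).symm a)).1
      simp only [hinv, Equiv.apply_symm_apply] at e
      have e2 := (α j (inv j)).injective ((ht (inv j)).injective e)
      exact e2.symm
    -- condition (i)
    intro a b i j
    refine ⟨?_, hii a b i j⟩
    have e0 := (hP (inv i) i ((α i i).symm a) ((α (inv i) i).symm b)).1
    have e := (hP (inv i) i ((α i i).symm a) ((α (inv i) i).symm b)).2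
    rw [e0] at e
    simp only [hinv, Equiv.apply_symm_apply] at e
    rw [← hcond (t (inv i) (α i (inv i) (op b ((α i i).symm a))))
        ((α (inv i) i).symm b) (inv i) (inv i) i, Equiv.apply_symm_apply] at e
    have hA : ∀ y : X,
        op (α (inv i) i (t (inv i) (α i (inv i) (op b ((α i i).symm a))))) y
          = op (op b a) y := by
      intro y
      have e1 := hii (α i (inv i) (op b ((α i i).symm a))) y (inv i) i
      rw [hinv, Equiv.symm_apply_apply] at e1
      rw [← e1]
      have e2 := hcond ((α (inv i) i).symm b) ((α i i).symm a) (inv i) i i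
      rw [Equiv.apply_symm_apply, Equiv.apply_symm_apply] at e2
      rw [← e2]
    rw [hA, hA] at e
    exact e.symm
  · intro h i j
    have hi : ∀ (a b : X) (i : I), t i (op (op b a) b) = op (op b a) (t i b) :=
      fun a b i => (h a b i i).1
    have hii : ∀ (a b : X) (i j : I),
        op (α (inv i) j ((α (inv i) i).symm a)) b = op (α i j (t i a)) b :=
      fun a b i j => (h a b i j).2
    funext p
    obtain ⟨a, b⟩ := p
    simp only [Rm, R21, K1, K2, Function.comp_apply, Prod.swap_prod_mk, Prod.mk.injEq]
    have e : op (α (inv j) (inv i) b) a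
        = op (α j (inv i) (t j (α (inv j) j b))) a := by
      have e' := hii (α (inv j) j b) a j (inv i)
      rwa [Equiv.symm_apply_apply] at e'
    constructor
    · exact congrArg (fun x => t i (α (inv i) i x)) e.symm
    · rw [e.symm]
      rw [← hcond (t i (α (inv i) i (op (α (inv j) (inv i) b) a))) b i (inv j) j]
      have e1 := hii (α (inv i) i (op (α (inv j) (inv i) b) a)) (t j (α (inv j) j b)) i j
      have e2 := hii (α (inv i) i (op (α (inv j) (inv i) b) a)) (α (inv j) j b) i j
      rw [Equiv.symm_apply_apply] at e1 e2
      rw [← e1, ← e2, ← hcond b a (inv j) (inv i) j]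
      exact (hi (α (inv i) j a) (α (inv j) j b) j).symm

end Stmt6
end

section
/- Let (X, ▷) be a rack, I an index set with an involutive map i ↦ ī, and for all i, j ∈ I let α_{ij} : X → X be bijective maps satisfying α_{ih}(a) ▷ α_{jh}(b) = α_{jh}(α_{ij}(a) ▷ b) for all a, b ∈ X and i, j, h ∈ I; let (X, ▷_{ij}) be the p-rack with a ▷_{ij} b := α_{ij}(a) ▷ b and R^{ij}(b,a) = (b, b ▷_{ij} a) the associated solution. Let t_i, κ_i : X → X be bijective maps with κ_i = t_i ∘ α_{īi} for all i ∈ I. Then the maps K_i : X → X, a ↦ κ_i(a), form a bijective parametric reflection for R if and only if, for all a, b ∈ X and i, j ∈ I: (i) t_i(a ▷ b) = a ▷ t_i(b), and (ii) α_{īj}(α_{īi}^{-1}(a)) ▷ b = α_{ij}(t_i(a)) ▷ b. -/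
namespace Stmt7

variable {X P : Type*}

/-- The map `R^{ij} : X × X → X × X`, `R^{ij}(b, a) = (σ^{ij}_a(b), τ^{ij}_b(a))`. -/
def Rm (σ τ : P → P → X → X → X) (i j : P) : X × X → X × X :=
  fun p => (σ i j p.2 p.1, τ i j p.1 p.2)

/-- `R_{21}^{ij} = π ∘ R^{ij} ∘ π` where `π` is the flip. -/
def R21 (σ τ : P → P → X → X → X) (i j : P) : X × X → X × X :=
  Prod.swap ∘ Rm σ τ i j ∘ Prod.swap

/-- `K_1^{z}(a,b) = (κ^{z}(a), b)`. -/
def K1 (κ : P → X → X) (z : P) : X × X → X × X := fun p => (κ z p.1, p.2)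

/-- `K_2^{z}(a,b) = (a, κ^{z}(b))`. -/
def K2 (κ : P → X → X) (z : P) : X × X → X × X := fun p => (p.1, κ z p.2)

/-- The parametric set-theoretic reflection equation for `K^z` with respect to
the solution `R` and the involution `μ`. -/
def IsReflection (σ τ : P → P → X → X → X) (μ : P → P) (κ : P → X → X) : Prop :=
  ∀ z1 z2 : P,
    Rm σ τ z1 z2 ∘ K1 κ z1 ∘ R21 σ τ z2 (μ z1) ∘ K2 κ z2
      = K2 κ z2 ∘ Rm σ τ z1 (μ z2) ∘ K1 κ z1 ∘ R21 σ τ (μ z2) (μ z1)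

/-- The parametric self-distributivity law defining p-shelves,
with `d i j a b = a ▷_{ij} b`. -/
def IsPShelf (d : P → P → X → X → X) : Prop :=
  ∀ (i j k : P) (a b c : X), d i k a (d j k b c) = d j k (d i j a b) (d i k a c)

/-- reflections for the p-rack `a ▷_{ij} b := α_{ij}(a) ▷ b`
built from a rack `(X, ▷)`: the maps `κ_i = t_i ∘ α_{ī i}` form a bijective
parametric reflection iff conditions (i) and (ii) hold. -/
theorem pRack_twisted_reflection_iff {X I : Type*} (op : X → X → X)
    (hshelf : ∀ a b c : X, op a (op b c) = op (op a b) (op a c))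
    (hrack : ∀ a : X, Function.Bijective (op a))
    (inv : I → I) (hinv : ∀ i, inv (inv i) = i)
    (α : I → I → X ≃ X)
    (hcond : ∀ (a b : X) (i j h : I), op (α i h a) (α j h b) = α j h (op (α i j a) b))
    (t : I → X → X) (ht : ∀ i, Function.Bijective (t i)) :
    IsReflection (fun _ _ (_ : X) b => b) (fun i j a b => op (α i j a) b) inv
        (fun i a => t i (α (inv i) i a))
      ↔ ∀ (a b : X) (i j : I),
          (t i (op a b) = op a (t i b))
          ∧ (op (α (inv i) j ((α (inv i) i).symm a)) b = op (α i j (t i a)) b) := by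
  have hrefl : IsReflection (fun _ _ (_ : X) b => b) (fun i j a b => op (α i j a) b) inv
        (fun i a => t i (α (inv i) i a)) ↔
      ∀ (z1 z2 : I) (a b : X),
        t z1 ((α (inv z1) z1) (op ((α z2 (inv z1)) (t z2 ((α (inv z2) z2) b))) a)) =
            t z1 ((α (inv z1) z1) (op ((α (inv z2) (inv z1)) b) a)) ∧
          op ((α z1 z2) (t z1 ((α (inv z1) z1)
                (op ((α z2 (inv z1)) (t z2 ((α (inv z2) z2) b))) a))))
              (t z2 ((α (inv z2) z2) b)) =
            t z2 ((α (inv z2) z2) (op ((α z1 (inv z2))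
                (t z1 ((α (inv z1) z1) (op ((α (inv z2) (inv z1)) b) a)))) b)) := by
    simp only [IsReflection, funext_iff, Prod.forall, Function.comp_apply, Rm, R21, K1, K2,
      Prod.swap, Prod.mk.injEq]
  rw [hrefl]
  constructor
  · intro H a b i j
    -- first extract condition (ii), which is the first component (E1) made injective
    have hii : ∀ (a b : X) (i j : I),
        op (α (inv i) j ((α (inv i) i).symm a)) b = op (α i j (t i a)) b := by
      intro a b i j
      have h1 := (H (inv j) i b ((α (inv i) i).symm a)).1
      rw [hinv] at h1
      have h2 := (ht (inv j)).injective h1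
      have h3 := (α j (inv j)).injective h2
      rw [Equiv.apply_symm_apply] at h3
      exact h3.symm
    refine ⟨?_, hii a b i j⟩
    -- condition (i): use E2 at z1 = z2 = i with suitable a₀, b₀
    obtain ⟨b₀, hb₀⟩ := (α (inv i) i).surjective b
    set tE := Equiv.ofBijective (t i) (ht i) with htE
    obtain ⟨a₀, ha₀⟩ := (hrack ((α (inv i) (inv i)) b₀)).surjective
      ((α (inv i) i).symm (tE.symm ((α i i).symm a)))
    have hw2 : t i ((α (inv i) i) (op ((α (inv i) (inv i)) b₀) a₀)) = (α i i).symm a := by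
      rw [ha₀, Equiv.apply_symm_apply]
      exact tE.apply_symm_apply _
    have hE2 := (H i i a₀ b₀).2
    rw [(H i i a₀ b₀).1, hw2, ← hcond ((α i i).symm a) b₀ i (inv i) i] at hE2
    rw [Equiv.apply_symm_apply, hb₀] at hE2
    exact hE2.symm
  · intro H z1 z2 a b
    have hE1 : op ((α z2 (inv z1)) (t z2 ((α (inv z2) z2) b))) a =
        op ((α (inv z2) (inv z1)) b) a := by
      have := (H ((α (inv z2) z2) b) a z2 (inv z1)).2
      rw [Equiv.symm_apply_apply] at this
      exact this.symm
    refine ⟨by rw [hE1], ?_⟩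
    rw [hE1]
    set w := t z1 ((α (inv z1) z1) (op ((α (inv z2) (inv z1)) b) a)) with hw
    rw [← hcond w b z1 (inv z2) z2]
    exact ((H ((α z1 z2) w) ((α (inv z2) z2) b) z2 z2).1).symm

end Stmt7
end

section
/- Let (X, ▷) be a shelf, I an index set with an involutive map i ↦ ī, and for all i, j ∈ I let α_{ij} : X → X be bijective maps satisfying α_{ih}(a) ▷ α_{jh}(b) = α_{jh}(α_{ij}(a) ▷ b) and α_{ij} = α_{hj} ∘ α_{ih} for all a, b ∈ X and i, j, h ∈ I; let (X, ▷_{ij}) be the p-shelf with a ▷_{ij} b := α_{ij}(a) ▷ b and R^{ij}(b,a) = (b, b ▷_{ij} a) the associated solution. Let κ : X → X be a bijective map satisfying: κ(a) ▷ b = a ▷ b and κ((a ▷ b) ▷ a) = (a ▷ b) ▷ κ(a) for all a, b ∈ X (i.e. κ is a bijective reflection for the shelf (X, ▷)), and κ ∘ α_{ij} = α_{ij} ∘ κ for all i, j ∈ I. Then the maps K_i : X → X, a ↦ κ(α_{īi}(a)), form a bijective parametric reflection for R. -/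
namespace Stmt8

variable {X P : Type*}

/-- The map `R^{ij} : X × X → X × X`, `R^{ij}(b, a) = (σ^{ij}_a(b), τ^{ij}_b(a))`. -/
def Rm (σ τ : P → P → X → X → X) (i j : P) : X × X → X × X :=
  fun p => (σ i j p.2 p.1, τ i j p.1 p.2)

/-- `R_{21}^{ij} = π ∘ R^{ij} ∘ π` where `π` is the flip. -/
def R21 (σ τ : P → P → X → X → X) (i j : P) : X × X → X × X :=
  Prod.swap ∘ Rm σ τ i j ∘ Prod.swap

/-- `K_1^{z}(a,b) = (κ^{z}(a), b)`. -/
def K1 (κ : P → X → X) (z : P) : X × X → X × X := fun p => (κ z p.1, p.2)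

/-- `K_2^{z}(a,b) = (a, κ^{z}(b))`. -/
def K2 (κ : P → X → X) (z : P) : X × X → X × X := fun p => (p.1, κ z p.2)

/-- The parametric set-theoretic reflection equation for `K^z` with respect to
the solution `R` and the involution `μ`. -/
def IsReflection (σ τ : P → P → X → X → X) (μ : P → P) (κ : P → X → X) : Prop :=
  ∀ z1 z2 : P,
    Rm σ τ z1 z2 ∘ K1 κ z1 ∘ R21 σ τ z2 (μ z1) ∘ K2 κ z2
      = K2 κ z2 ∘ Rm σ τ z1 (μ z2) ∘ K1 κ z1 ∘ R21 σ τ (μ z2) (μ z1)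

/-- The parametric self-distributivity law defining p-shelves,
with `d i j a b = a ▷_{ij} b`. -/
def IsPShelf (d : P → P → X → X → X) : Prop :=
  ∀ (i j k : P) (a b c : X), d i k a (d j k b c) = d j k (d i j a b) (d i k a c)

/-- if `κ` is a bijective reflection of the shelf `(X, ▷)`
commuting with the maps `α_{ij}` (which satisfy the compatibility condition and
`α_{ij} = α_{hj} ∘ α_{ih}`), then `K_i := κ ∘ α_{ī i}` is a bijective
parametric reflection for the p-shelf solution. -/
theorem shelf_reflection_to_pShelf_reflection {X I : Type*} (op : X → X → X)
    (hshelf : ∀ a b c : X, op a (op b c) = op (op a b) (op a c))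
    (inv : I → I) (hinv : ∀ i, inv (inv i) = i)
    (α : I → I → X ≃ X)
    (hcond : ∀ (a b : X) (i j h : I), op (α i h a) (α j h b) = α j h (op (α i j a) b))
    (hcomp : ∀ (i j h : I) (a : X), α h j (α i h a) = α i j a)
    (κ : X → X) (hκ : Function.Bijective κ)
    (hrefl1 : ∀ a b : X, op (κ a) b = op a b)
    (hrefl2 : ∀ a b : X, κ (op (op a b) a) = op (op a b) (κ a))
    (hcommκ : ∀ (i j : I) (a : X), κ (α i j a) = α i j (κ a)) :
    (∀ i : I, Function.Bijective fun a => κ (α (inv i) i a))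
    ∧ IsReflection (fun _ _ (_ : X) b => b) (fun i j a b => op (α i j a) b) inv
        (fun i a => κ (α (inv i) i a)) := by
  refine ⟨fun i => hκ.comp (α (inv i) i).bijective, fun z1 z2 => ?_⟩
  funext p
  obtain ⟨a, b⟩ := p
  simp only [Function.comp_apply, Rm, R21, K1, K2, Prod.swap, Prod.fst, Prod.snd]
  set C : X := op (α (inv z2) z1 b) (α (inv z1) z1 a) with hC
  -- first components
  have hA : κ (α (inv z1) z1 (op (α z2 (inv z1) (κ (α (inv z2) z2 b))) a)) = κ C := by
    rw [← hcond, hcommκ, hcomp, ← hcommκ, hrefl1]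
  have hB : κ (α (inv z1) z1 (op (α (inv z2) (inv z1) b) a)) = κ C := by
    rw [← hcond]
  have key : ∀ v t : X, op (op v t) (κ v) = κ (op (op v t) v) := fun v t => (hrefl2 v t).symm
  refine Prod.ext ?_ ?_ <;> simp only []
  · rw [hA, hB]
  · rw [hA, hB]
    conv_rhs => rw [← hcond]
    rw [← hcommκ z1 z2 C, hrefl1, hrefl1]
    rw [hC, ← hcond]
    exact key _ _


end Stmt8
end

section
/- Let (X, ▷_{ij}) be a p-shelf indexed by pairs of elements of a set Y, and for all z_i, z_j ∈ Y, a ∈ X, let σ^{ij}_a : X → X be bijections. Define τ^{ij}_b(a) := (σ^{ji}_{σ^{ij}_a(b)})^{-1}(σ^{ij}_a(b) ▷_{ij} a) and R^{ij}(b, a) := (σ^{ij}_a(b), τ^{ij}_b(a)). Then R^{ij} is a solution of the parametric set-theoretic Yang–Baxter equation if and only if the following two conditions hold for all a, b, c ∈ X and z_i, z_j, z_k ∈ Y: (1) σ^{ik}_a(σ^{ij}_b(c)) = σ^{ij}_{σ^{jk}_a(b)}(σ^{ik}_{τ^{jk}_b(a)}(c)); (2) σ^{ik}_c(b) ▷_{ij}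 σ^{jk}_c(a) = σ^{jk}_c(b ▷_{ij} a) (i.e. if and only if the map φ^{ij}(a,b) = (a, σ^{ji}_a(b)) is an admissible twist). -/
namespace Stmt11

variable {X P : Type*}

/-- `R_{12}` acting on the first two factors of `X × X × X`, where
`R^{ij}(b,a) = (σ^{ij}_a(b), τ^{ij}_b(a))`. -/
def R12 (σ τ : P → P → X → X → X) (i j : P) : X × X × X → X × X × X :=
  fun p => (σ i j p.2.1 p.1, τ i j p.1 p.2.1, p.2.2)

def R13 (σ τ : P → P → X → X → X) (i j : P) : X × X × X → X × X × X :=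
  fun p => (σ i j p.2.2 p.1, p.2.1, τ i j p.1 p.2.2)

def R23 (σ τ : P → P → X → X → X) (i j : P) : X × X × X → X × X × X :=
  fun p => (p.1, σ i j p.2.2 p.2.1, τ i j p.2.1 p.2.2)

/-- The parametric set-theoretic Yang–Baxter equation. -/
def IsYB (σ τ : P → P → X → X → X) : Prop :=
  ∀ i j k : P,
    R12 σ τ i j ∘ R13 σ τ i k ∘ R23 σ τ j k
      = R23 σ τ j k ∘ R13 σ τ i k ∘ R12 σ τ i j

/-- The parametric self-distributivity law defining p-shelves,
with `d i j a b = a ▷_{ij} b`. -/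
def IsPShelf (d : P → P → X → X → X) : Prop :=
  ∀ (i j k : P) (a b c : X), d i k a (d j k b c) = d j k (d i j a b) (d i k a c)

/-- given a p-shelf `(X, ▷_{ij})` and bijections `σ^{ij}_a`, with
`τ^{ij}_b(a) := (σ^{ji}_{σ^{ij}_a(b)})⁻¹(σ^{ij}_a(b) ▷_{ij} a)`, the map
`R^{ij}(b,a) = (σ^{ij}_a(b), τ^{ij}_b(a))` is a solution of the parametric
Yang–Baxter equation iff the two admissible-twist conditions hold. -/
theorem twisted_solution_iff_admissible {X Y : Type*}
    (d : Y → Y → X → X → X) (hshelf : IsPShelf d)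
    (σ : Y → Y → X → X ≃ X) :
    IsYB (fun i j a b => σ i j a b)
        (fun i j b a => (σ j i (σ i j a b)).symm (d i j (σ i j a b) a))
      ↔ ∀ (a b c : X) (i j k : Y),
          (σ i k a (σ i j b c)
              = σ i j (σ j k a b)
                  (σ i k ((σ k j (σ j k a b)).symm (d j k (σ j k a b) a)) c))
          ∧ (d i j (σ i k c b) (σ j k c a) = σ j k c (d i j b a)) := by
  constructor
  · intro h a b c i j k
    have key := fun (i j k : Y) (x y z : X) => congrFun (h i j k) (x, y, z)
    simp only [R12, R13, R23, Function.comp_apply, Prod.mk.injEq] at key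
    have hA := fun (i j k : Y) (x y z : X) => (key i j k x y z).1
    have hB := fun (i j k : Y) (x y z : X) => (key i j k x y z).2.1
    refine ⟨(hA i j k c b a).symm, ?_⟩
    have hx : σ i j a ((σ i j a).symm b) = b := (σ i j a).apply_symm_apply b
    have hB' := hB i j k ((σ i j a).symm b) a c
    rw [hx] at hB'
    have hT2 : σ i j (σ j k c a)
        (σ i k ((σ k j (σ j k c a)).symm (d j k (σ j k c a) c)) ((σ i j a).symm b))
        = σ i k c b := by
      have := hA i j k ((σ i j a).symm b) a c
      rw [hx] at this
      exact this
    rw [hT2] at hB'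
    have step := hA j i k ((σ j i b).symm (d i j b a)) b c
    have this2 := congrArg (σ j i (σ i k c b)) hB'
    rw [Equiv.apply_symm_apply] at this2
    rw [this2, step, Equiv.apply_symm_apply]
  · intro H i j k
    funext p
    obtain ⟨x, y, z⟩ := p
    simp only [Function.comp_apply, R12, R13, R23, Prod.mk.injEq]
    refine ⟨?_, ?_, ?_⟩
    · exact ((H z y x i j k).1).symm
    · generalize hS : σ i j y x = S
      generalize hW : σ j k z y = W
      generalize hu : (σ k j W).symm (d j k W z) = u
      generalize hT : σ i k z S = T
      generalize hM : σ i k u x = M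
      generalize hv : (σ j i S).symm (d i j S y) = v
      generalize hP : (σ k i T).symm (d i k T z) = P
      have fMT : σ i j W M = T := by
        rw [← hM, ← hT, ← hu, ← hW, ← hS]
        exact ((H z y x i j k).1).symm
      have e1 : σ j k z (σ j i S v) = σ j i T (σ j k P v) := by
        have := (H z S v j i k).1
        rw [hT, hP] at this
        exact this
      have e2 : σ j i S v = d i j S y := by rw [← hv]; exact (σ j i S).apply_symm_apply _
      have e3 : d i j T W = σ j k z (d i j S y) := by
        have := (H y S z i j k).2
        rw [hT, hW] at this
        exact this
      rw [fMT, Equiv.symm_apply_eq, ← e1, e2, e3]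
    · generalize hS : σ i j y x = S
      generalize hW : σ j k z y = W
      generalize hu : (σ k j W).symm (d j k W z) = u
      generalize hT : σ i k z S = T
      generalize hM : σ i k u x = M
      generalize hv : (σ j i S).symm (d i j S y) = v
      generalize hP : (σ k i T).symm (d i k T z) = P
      generalize hN : σ j k P v = N
      have fMT : σ i j W M = T := by
        rw [← hM, ← hT, ← hu, ← hW, ← hS]
        exact ((H z y x i j k).1).symm
      have e1 : σ j k z (σ j i S v) = σ j i T (σ j k P v) := by
        have := (H z S v j i k).1
        rw [hT, hP] at this
        exact this
      have e2 : σ j i S v = d i j S y := by rw [← hv]; exact (σ j i S).apply_symm_apply _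
      have e3 : d i j T W = σ j k z (d i j S y) := by
        have := (H y S z i j k).2
        rw [hT, hW] at this
        exact this
      have fN : σ j i T N = d i j T W := by
        rw [← hN, ← e1, e2, e3]
      have fN' : (σ j i T).symm (d i j T W) = N := by
        rw [← fN]; exact (σ j i T).symm_apply_apply N
      have f6 : ∀ C : X, σ k j W (σ k i M C) = σ k i T (σ k j N C) := by
        intro C
        have := (H W M C k i j).1
        rw [fMT, fN'] at this
        exact this
      apply (σ k i M).injective
      apply (σ k j W).injective
      rw [Equiv.apply_symm_apply, f6, Equiv.apply_symm_apply]
      have f8 := (H u M W i k j).2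
      rw [fMT] at f8
      have hu' : σ k j W u = d j k W z := by rw [← hu]; exact (σ k j W).apply_symm_apply _
      rw [hu'] at f8
      have f7 := (H P N T j k i).2
      rw [fN] at f7
      have hP' : σ k i T P = d i k T z := by rw [← hP]; exact (σ k i T).apply_symm_apply _
      rw [hP'] at f7
      rw [← f8, ← f7]
      exact hshelf i j k T W z



end Stmt11
end

section
/- Let (X, ▷_{ij}) be a p-shelf indexed by pairs of elements of a set Y with an involutive map μ (write z̄ = μ(z)). Let R^{ij}(b,a) = (σ^{ij}_a(b), τ^{ij}_b(a)) be a left non-degenerate solution of the parametric Yang–Baxter equation (each σ^{ij}_a bijective) such that τ^{ij}_b(a) = (σ^{ji}_{σ^{ij}_a(b)})^{-1}(σ^{ij}_a(b) ▷_{ij} a) for all a, b ∈ X and z_i, z_j ∈ Y, and let S^{ij}(b,a) = (b, b ▷_{ij} a) be the p-shelf solution. Suppose the bijective maps K^{z} : X → X, a ↦ κ^{z}(a), form a parametric reflection for S, and suppose κ^{z_j}(σ^{z̄_j z_i}_a(b)) = σ^{z_j z_i}_a(κ^{z_j}(b)) for all a, b ∈ X and z_i, z_j ∈ Y. Then K^{z}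 is also a parametric reflection for R. -/
namespace Stmt12

variable {X P : Type*}

/-- `R_{12}` acting on the first two factors of `X × X × X`, where
`R^{ij}(b,a) = (σ^{ij}_a(b), τ^{ij}_b(a))`. -/
def R12 (σ τ : P → P → X → X → X) (i j : P) : X × X × X → X × X × X :=
  fun p => (σ i j p.2.1 p.1, τ i j p.1 p.2.1, p.2.2)

def R13 (σ τ : P → P → X → X → X) (i j : P) : X × X × X → X × X × X :=
  fun p => (σ i j p.2.2 p.1, p.2.1, τ i j p.1 p.2.2)

def R23 (σ τ : P → P → X → X → X) (i j : P) : X × X × X → X × X × X :=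
  fun p => (p.1, σ i j p.2.2 p.2.1, τ i j p.2.1 p.2.2)

/-- The parametric set-theoretic Yang–Baxter equation. -/
def IsYB (σ τ : P → P → X → X → X) : Prop :=
  ∀ i j k : P,
    R12 σ τ i j ∘ R13 σ τ i k ∘ R23 σ τ j k
      = R23 σ τ j k ∘ R13 σ τ i k ∘ R12 σ τ i j

/-- The map `R^{ij} : X × X → X × X`, `R^{ij}(b, a) = (σ^{ij}_a(b), τ^{ij}_b(a))`. -/
def Rm (σ τ : P → P → X → X → X) (i j : P) : X × X → X × X :=
  fun p => (σ i j p.2 p.1, τ i j p.1 p.2)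

/-- `R_{21}^{ij} = π ∘ R^{ij} ∘ π` where `π` is the flip. -/
def R21 (σ τ : P → P → X → X → X) (i j : P) : X × X → X × X :=
  Prod.swap ∘ Rm σ τ i j ∘ Prod.swap

/-- `K_1^{z}(a,b) = (κ^{z}(a), b)`. -/
def K1 (κ : P → X → X) (z : P) : X × X → X × X := fun p => (κ z p.1, p.2)

/-- `K_2^{z}(a,b) = (a, κ^{z}(b))`. -/
def K2 (κ : P → X → X) (z : P) : X × X → X × X := fun p => (p.1, κ z p.2)

/-- The parametric set-theoretic reflection equation for `K^z` with respect to
the solution `R` and the involution `μ`. -/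
def IsReflection (σ τ : P → P → X → X → X) (μ : P → P) (κ : P → X → X) : Prop :=
  ∀ z1 z2 : P,
    Rm σ τ z1 z2 ∘ K1 κ z1 ∘ R21 σ τ z2 (μ z1) ∘ K2 κ z2
      = K2 κ z2 ∘ Rm σ τ z1 (μ z2) ∘ K1 κ z1 ∘ R21 σ τ (μ z2) (μ z1)

/-- The parametric self-distributivity law defining p-shelves,
with `d i j a b = a ▷_{ij} b`. -/
def IsPShelf (d : P → P → X → X → X) : Prop :=
  ∀ (i j k : P) (a b c : X), d i k a (d j k b c) = d j k (d i j a b) (d i k a c)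

/-- if `K^z = κ^z` is a bijective parametric reflection for the
p-shelf solution `S^{ij}(b,a) = (b, b ▷_{ij} a)` and
`κ^{z_j}(σ^{z̄_j z_i}_a(b)) = σ^{z_j z_i}_a(κ^{z_j}(b))` holds, then `K^z` is
also a parametric reflection for the left non-degenerate solution
`R^{ij}(b,a) = (σ^{ij}_a(b), τ^{ij}_b(a))` with
`τ^{ij}_b(a) = (σ^{ji}_{σ^{ij}_a(b)})⁻¹(σ^{ij}_a(b) ▷_{ij} a)`. -/
theorem reflection_transfer {X Y : Type*}
    (d : Y → Y → X → X → X) (hshelf : IsPShelf d)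
    (μ : Y → Y) (hμ : ∀ z, μ (μ z) = z)
    (σ : Y → Y → X → X ≃ X)
    (hR : IsYB (fun i j a b => σ i j a b)
        (fun i j b a => (σ j i (σ i j a b)).symm (d i j (σ i j a b) a)))
    (κ : Y → X → X) (hκ : ∀ z, Function.Bijective (κ z))
    (hSrefl : IsReflection (fun _ _ (_ : X) b => b) d μ κ)
    (hcond : ∀ (a b : X) (zi zj : Y), κ zj (σ (μ zj) zi a b) = σ zj zi a (κ zj b)) :
    IsReflection (fun i j a b => σ i j a b)
      (fun i j b a => (σ j i (σ i j a b)).symm (d i j (σ i j a b) a)) μ κ := by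

  -- commutation of κ with the inverses of σ
  have hcs : ∀ (a b : X) (zi zj : Y),
      κ zj ((σ (μ zj) zi a).symm b) = (σ zj zi a).symm (κ zj b) := by
    intro a b zi zj
    apply (σ zj zi a).injective
    rw [Equiv.apply_symm_apply, ← hcond, Equiv.apply_symm_apply]
  -- consequences of the reflection equation for the shelf solution
  have hS : ∀ (z1 z2 : Y) (a b : X),
      (κ z1 (d z2 (μ z1) (κ z2 a) b), d z1 z2 (κ z1 (d z2 (μ z1) (κ z2 a) b)) (κ z2 a))
        = (κ z1 (d (μ z2) (μ z1) a b),
            κ z2 (d z1 (μ z2) (κ z1 (d (μ z2) (μ z1) a b)) a)) := by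
    intro z1 z2 a b
    have h := congrFun (hSrefl z1 z2) (b, a)
    simpa [Rm, R21, K1, K2, Function.comp] using h
  have hA : ∀ (z1 z2 : Y) (a b : X),
      d z2 (μ z1) (κ z2 a) b = d (μ z2) (μ z1) a b := by
    intro z1 z2 a b
    have h := congrArg Prod.fst (hS z1 z2 a b)
    exact (hκ z1).injective h
  have hB : ∀ (z1 z2 : Y) (a b : X),
      d z1 z2 (κ z1 (d (μ z2) (μ z1) a b)) (κ z2 a)
        = κ z2 (d z1 (μ z2) (κ z1 (d (μ z2) (μ z1) a b)) a) := by
    intro z1 z2 a b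
    have h := congrArg Prod.snd (hS z1 z2 a b)
    simpa [hA] using h
  intro z1 z2
  funext p
  obtain ⟨b, a⟩ := p
  simp only [Function.comp_apply, Rm, R21, K1, K2, Prod.swap_prod_mk, Prod.mk.injEq]
  have h1 : σ z2 (μ z1) b (κ z2 a) = κ z2 (σ (μ z2) (μ z1) b a) :=
    (hcond b a (μ z1) z2).symm
  rw [h1]
  set u := σ (μ z2) (μ z1) b a with hu
  have h2 : d z2 (μ z1) (κ z2 u) b = d (μ z2) (μ z1) u b := hA z1 z2 u b
  rw [h2]
  set v := d (μ z2) (μ z1) u b with hv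
  rw [hcs (κ z2 u) v z2 z1, hcs u v (μ z2) z1, Equiv.apply_symm_apply,
    Equiv.apply_symm_apply, hcs (κ z1 v) (d z1 (μ z2) (κ z1 v) u) z1 z2]
  refine ⟨rfl, ?_⟩
  rw [hv]
  exact congrArg _ (hB z1 z2 u b)


end Stmt12
end

section
/- Let (X, ∘) be a group, Y an index set, and for all z_i, z_j ∈ Y and a, b ∈ X let σ^{ij}_a, τ^{ij}_b : X → X be maps such that each σ^{ij}_a is bijective and, for all a, b ∈ X: a ∘ b = σ^{ij}_a(b) ∘ τ^{ij}_b(a) and σ^{ji}_{σ^{ij}_a(b)}(τ^{ij}_b(a)) = a. Let h : Y × Y → Y be a symmetric function (h(z_i, z_j) = h(z_j, z_i)) and define a •_{ji} b := a ∘ (σ^{ij}_a)^{-1}(b) ∘ h(z_i, z_j). Then a •_{ji} b = b •_{ij} a for all a, b ∈ X and z_i, z_j ∈ Y. -/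
/-- let `(X, ∘)` be a group, `Y ⊆ X` a parameter set, and suppose
the bijections `σ^{ij}_a` and maps `τ^{ij}_b` satisfy
`a ∘ b = σ^{ij}_a(b) ∘ τ^{ij}_b(a)` and `σ^{ji}_{σ^{ij}_a(b)}(τ^{ij}_b(a)) = a`.
Then for any symmetric `h : Y × Y → Y`, the operation
`a •_{ji} b := a ∘ (σ^{ij}_a)⁻¹(b) ∘ h(z_i, z_j)` satisfies
`a •_{ji} b = b •_{ij} a`. -/
theorem bullet_symm {X : Type*} [Group X] (Y : Set X)
    (σ : Y → Y → X → X ≃ X) (τ : Y → Y → X → X → X)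
    (hfact : ∀ (i j : Y) (a b : X), a * b = σ i j a b * τ i j b a)
    (hrev : ∀ (i j : Y) (a b : X), σ j i (σ i j a b) (τ i j b a) = a)
    (h : Y → Y → Y) (hsymm : ∀ i j : Y, h i j = h j i) :
    ∀ (i j : Y) (a b : X),
      a * (σ i j a).symm b * (h i j : X) = b * (σ j i b).symm a * (h j i : X) := by
  intro i j a b
  rw [hsymm i j]
  congr 1
  set c := (σ i j a).symm b with hc
  have hb : σ i j a c = b := (σ i j a).apply_symm_apply b
  have h1 : a * c = b * τ i j c a := by rw [hfact i j a c, hb]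
  have h2 : (σ j i b).symm a = τ i j c a := by
    rw [Equiv.symm_apply_eq]
    conv_lhs => rw [← hrev i j a c, hb]
  rw [h2, ← h1]
end

section
/- Let (X, +, ∘) be a skew left brace and Y ⊆ D(X) ∩ Z(X,+) a subset such that z_i ∘ z_j = z_j ∘ z_i for all z_i, z_j ∈ Y. For z_i, z_j ∈ Y and a, b ∈ X define σ^{ij}_a(b) := z_i^{-1} − a ∘ z_i^{-1} ∘ z_j + a ∘ b ∘ z_j, τ^{ij}_b(a) := σ^{ij}_a(b)^{-1} ∘ a ∘ b (inverses taken in (X, ∘)), and b ▷_{ij} a := −b ∘ z_i ∘ z_j^{-1} + a + b ∘ z_i ∘ z_j^{-1}. Then: (X, ▷_{ij}) is a p-rack; each σ^{ij}_a is bijective; a ∘ b = σ^{ij}_a(b) ∘ τ^{ij}_b(a); the admissible twist conditions σ^{ik}_a(σ^{ij}_b(c)) = σ^{ij}_{σ^{jk}_a(b)}(σ^{ik}_{τ^{jk}_b(a)}(c)) and σ^{ik}_c(b) ▷_{ij} σ^{jk}_c(a) = σ^{jk}_c(b ▷_{ij} a) hold for all a, b, c ∈ X and z_i, z_j, z_k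 ∈ Y; and consequently R^{ij}(b, a) := (σ^{ij}_a(b), τ^{ij}_b(a)) is a solution of the parametric set-theoretic Yang–Baxter equation. -/
namespace Stmt14

variable {X P : Type*}

/-- `R_{12}` acting on the first two factors of `X × X × X`, where
`R^{ij}(b,a) = (σ^{ij}_a(b), τ^{ij}_b(a))`. -/
def R12 (σ τ : P → P → X → X → X) (i j : P) : X × X × X → X × X × X :=
  fun p => (σ i j p.2.1 p.1, τ i j p.1 p.2.1, p.2.2)

def R13 (σ τ : P → P → X → X → X) (i j : P) : X × X × X → X × X × X :=
  fun p => (σ i j p.2.2 p.1, p.2.1, τ i j p.1 p.2.2)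

def R23 (σ τ : P → P → X → X → X) (i j : P) : X × X × X → X × X × X :=
  fun p => (p.1, σ i j p.2.2 p.2.1, τ i j p.2.1 p.2.2)

/-- The parametric set-theoretic Yang–Baxter equation. -/
def IsYB (σ τ : P → P → X → X → X) : Prop :=
  ∀ i j k : P,
    R12 σ τ i j ∘ R13 σ τ i k ∘ R23 σ τ j k
      = R23 σ τ j k ∘ R13 σ τ i k ∘ R12 σ τ i j

/-- The parametric self-distributivity law defining p-shelves,
with `d i j a b = a ▷_{ij} b`. -/
def IsPShelf (d : P → P → X → X → X) : Prop :=
  ∀ (i j k : P) (a b c : X), d i k a (d j k b c) = d j k (d i j a b) (d i k a c)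

variable [AddGroup X]

/-- `σ^{ij}_a(b) := z_i⁻¹ − a ∘ z_i⁻¹ ∘ z_j + a ∘ b ∘ z_j` (with `∘ = mul`,
`⁻¹ = inv` the skew-brace multiplicative structure, `+` the additive one). -/
def sig (mul : X → X → X) (inv : X → X) {Y : Set X} (i j : Y) (a b : X) : X :=
  inv ↑i - mul (mul a (inv ↑i)) ↑j + mul (mul a b) ↑j

/-- `τ^{ij}_b(a) := σ^{ij}_a(b)⁻¹ ∘ a ∘ b`. -/
def tau (mul : X → X → X) (inv : X → X) {Y : Set X} (i j : Y) (b a : X) : X :=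
  mul (mul (inv (sig mul inv i j a b)) a) b

/-- `b ▷_{ij} a := −b ∘ z_i ∘ z_j⁻¹ + a + b ∘ z_i ∘ z_j⁻¹`. -/
def tri (mul : X → X → X) (inv : X → X) {Y : Set X} (i j : Y) (b a : X) : X :=
  -(mul (mul b ↑i) (inv ↑j)) + a + mul (mul b ↑i) (inv ↑j)

section Helpers


variable {X : Type*} [AddGroup X] [Group X]

/-- closed form of `σ^{ij}_a(b)` on raw elements. -/
def sg (zi zj a b : X) : X := zi⁻¹ - a * zi⁻¹ * zj + a * b * zj

lemma aneg (hb : ∀ a b c : X, a * (b + c) = a * b - a + a * c) (h1 : (1:X) = 0)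
    (a x : X) : a * -x = a - a * x + a := by
  have h := hb a x (-x)
  rw [add_neg_cancel, ← h1, mul_one] at h
  calc a * -x = -(a * x - a) + (a * x - a + a * -x) := (neg_add_cancel_left _ _).symm
    _ = -(a * x - a) + a := by rw [← h]
    _ = a - a * x + a := by rw [neg_sub]

lemma nmul {t : X} (ht : ∀ a b : X, (a + b) * t = a * t - t + b * t) (h1 : (1:X) = 0)
    (x : X) : (-x) * t = t - x * t + t := by
  have h := ht x (-x)
  rw [add_neg_cancel, ← h1, one_mul] at h
  calc (-x) * t = -(x * t - t) + (x * t - t + (-x) * t) := (neg_add_cancel_left _ _).symm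
    _ = -(x * t - t) + t := by rw [← h]
    _ = t - x * t + t := by rw [neg_sub]

lemma dinv {t : X} (ht : ∀ a b : X, (a + b) * t = a * t - t + b * t) (h1 : (1:X) = 0)
    (x y : X) : (x + y) * t⁻¹ = x * t⁻¹ - t⁻¹ + y * t⁻¹ := by
  apply mul_right_cancel (b := t)
  rw [inv_mul_cancel_right, sub_eq_add_neg, ht, ht, nmul ht h1, inv_mul_cancel_right,
    inv_mul_cancel_right, inv_mul_cancel, h1]
  simp [sub_eq_add_neg, add_assoc, neg_add_cancel_left, add_neg_cancel_left]

lemma hnc_of {t : X} (hct : ∀ a : X, a + t = t + a) : ∀ a : X, a + -t = -t + a := by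
  intro a
  have := congrArg (fun w => -t + (w + -t)) (hct a)
  simpa [add_assoc, neg_add_cancel_left, add_neg_cancel_left,
    ← add_assoc, neg_add_cancel] using this.symm

lemma centmulinv {t : X} (ht : ∀ a b : X, (a + b) * t = a * t - t + b * t)
    (hct : ∀ a : X, a + t = t + a) {x : X} (hx : ∀ a : X, a + x = x + a)
    (c : X) : c + x * t⁻¹ = x * t⁻¹ + c := by
  have hneg := hnc_of hct
  apply mul_right_cancel (b := t)
  rw [ht, ht, inv_mul_cancel_right]
  rw [sub_eq_add_neg, sub_eq_add_neg, add_assoc, add_assoc, hx (-t), ← add_assoc,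
    hx (c*t), add_assoc, hneg (c*t)]

lemma centinv {t : X} (ht : ∀ a b : X, (a + b) * t = a * t - t + b * t)
    (hct : ∀ a : X, a + t = t + a) (h1 : (1:X) = 0)
    (c : X) : c + t⁻¹ = t⁻¹ + c := by
  have h0 : (0:X) * t⁻¹ = t⁻¹ := by rw [← h1, one_mul]
  have := centmulinv ht hct (x := 0) (by intro a; simp) c
  rwa [h0] at this

lemma eleft (hb : ∀ a b c : X, a * (b + c) = a * b - a + a * c) (h1 : (1:X) = 0)
    (a x y u : X) : a * (x - y + u) = a * x - a * y + a * u := by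
  rw [hb, sub_eq_add_neg x y, hb, aneg hb h1]
  simp [sub_eq_add_neg, add_assoc, neg_add_cancel_left, add_neg_cancel_left]

lemma eright {t : X} (ht : ∀ a b : X, (a + b) * t = a * t - t + b * t) (h1 : (1:X) = 0)
    (x y u : X) : (x - y + u) * t = x * t - y * t + u * t := by
  rw [ht, sub_eq_add_neg x y, ht, nmul ht h1]
  simp [sub_eq_add_neg, add_assoc, neg_add_cancel_left, add_neg_cancel_left]

lemma econj {t : X} (ht : ∀ a b : X, (a + b) * t = a * t - t + b * t)
    (hct : ∀ a : X, a + t = t + a) (h1 : (1:X) = 0)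
    (u b : X) : (-u + b + u) * t = -(u * t) + b * t + u * t := by
  have hnc := hnc_of hct
  have hmv : ∀ a b : X, a + (t + b) = t + (a + b) := by
    intro a b; rw [← add_assoc, hct, add_assoc]
  have hmvn : ∀ a b : X, a + (-t + b) = -t + (a + b) := by
    intro a b; rw [← add_assoc, hnc, add_assoc]
  rw [ht, ht, nmul ht h1]
  simp only [sub_eq_add_neg, add_assoc]
  simp only [hmv, hct]
  simp only [hmvn, hnc]
  simp [add_assoc, neg_add_cancel_left, add_neg_cancel_left, ← add_assoc]

lemma eneg3 {t : X} (ht : ∀ a b : X, (a + b) * t = a * t - t + b * t)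
    (hct : ∀ a : X, a + t = t + a) (h1 : (1:X) = 0)
    (x y z : X) : (-x + y - z) * t = -(x * t) + y * t - z * t + (t + t) := by
  have hnc := hnc_of hct
  have hmv : ∀ a b : X, a + (t + b) = t + (a + b) := by
    intro a b; rw [← add_assoc, hct, add_assoc]
  have hmvn : ∀ a b : X, a + (-t + b) = -t + (a + b) := by
    intro a b; rw [← add_assoc, hnc, add_assoc]
  rw [sub_eq_add_neg, ht, ht, nmul ht h1, nmul ht h1]
  simp only [sub_eq_add_neg, add_assoc]
  simp only [hmv, hct]
  simp only [hmvn, hnc]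
  simp [add_assoc, neg_add_cancel_left, add_neg_cancel_left, ← add_assoc]

lemma eneg5 {t : X} (ht : ∀ a b : X, (a + b) * t = a * t - t + b * t)
    (hct : ∀ a : X, a + t = t + a) (h1 : (1:X) = 0)
    (z u x y : X) :
    (-z + u - x + y - u) * t = -(z * t) + u * t - x * t + y * t - u * t + (t + t) := by
  have hnc := hnc_of hct
  have hmv : ∀ a b : X, a + (t + b) = t + (a + b) := by
    intro a b; rw [← add_assoc, hct, add_assoc]
  have hmvn : ∀ a b : X, a + (-t + b) = -t + (a + b) := by
    intro a b; rw [← add_assoc, hnc, add_assoc]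
  rw [sub_eq_add_neg, sub_eq_add_neg, ht, ht, ht, ht, nmul ht h1, nmul ht h1, nmul ht h1]
  simp only [sub_eq_add_neg, add_assoc]
  simp only [hmv, hct]
  simp only [hmvn, hnc]
  simp [add_assoc, neg_add_cancel_left, add_neg_cancel_left, ← add_assoc]

lemma lamadd (hb : ∀ a b c : X, a * (b + c) = a * b - a + a * c)
    (c x y : X) : -c + c * (x + y) = (-c + c * x) + (-c + c * y) := by
  rw [hb]; simp [sub_eq_add_neg, add_assoc]

lemma sgcomp (hb : ∀ a b c : X, a * (b + c) = a * b - a + a * c) (h1 : (1:X) = 0)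
    {p : X} (hp : ∀ a b : X, (a + b) * p = a * p - p + b * p)
    (zi q a b c : X) :
    sg zi p a (sg zi q b c) = zi⁻¹ - (a * b) * zi⁻¹ * (q * p) + (a * b) * c * (q * p) := by
  unfold sg
  rw [eleft hb h1, eright hp h1]
  simp [mul_assoc, sub_eq_add_neg, add_assoc, neg_add_cancel_left, add_neg_cancel_left]

lemma vsg (hb : ∀ a b c : X, a * (b + c) = a * b - a + a * c) (h1 : (1:X) = 0)
    (V M x' p k : X) :
    V * sg p k (V⁻¹ * M) x' = V * p⁻¹ - M * p⁻¹ * k + M * x' * k := by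
  unfold sg
  rw [eleft hb h1]
  simp [mul_assoc, mul_inv_cancel_left, sub_eq_add_neg, add_assoc]

lemma qlem (h1 : (1:X) = 0)
    {zi zj zk : X}
    (hDi : ∀ a b : X, (a + b) * zi = a * zi - zi + b * zi)
    (hDj : ∀ a b : X, (a + b) * zj = a * zj - zj + b * zj)
    (hik : zi * zk = zk * zi) (hjk : zj * zk = zk * zj)
    (c b : X) :
    sg zi zk c b * zi * zj⁻¹ = sg zj zk c (b * zi * zj⁻¹) := by
  have m1 : ∀ w : X, zk * (zi * w) = zi * (zk * w) := by
    intro w; rw [← mul_assoc, ← hik, mul_assoc]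
  have m1' : zk * zi = zi * zk := hik.symm
  have c2 : zj⁻¹ * zk = zk * zj⁻¹ := (Commute.inv_left (hjk : Commute zj zk)).eq
  have m2 : ∀ w : X, zk * (zj⁻¹ * w) = zj⁻¹ * (zk * w) := by
    intro w; rw [← mul_assoc, ← c2, mul_assoc]
  have m2' : zk * zj⁻¹ = zj⁻¹ * zk := c2.symm
  unfold sg
  rw [eright hDi h1, eright (dinv hDj h1) h1]
  simp [mul_assoc, inv_mul_cancel_left, m1, m1', m2, m2', sub_eq_add_neg, add_assoc]

lemma prefixlem (h1 : (1:X) = 0)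
    {zi zj zk : X}
    (hDi : ∀ a b : X, (a + b) * zi = a * zi - zi + b * zi)
    (hDj : ∀ a b : X, (a + b) * zj = a * zj - zj + b * zj)
    (hij : zi * zj = zj * zi) (hik : zi * zk = zk * zi) (hjk : zj * zk = zk * zj)
    (z y S : X) :
    sg zj zk z y * zi⁻¹ - (z * y) * zi⁻¹ * zk
      = sg zi zk z S * zj⁻¹ - (z * S) * zj⁻¹ * zk := by
  have comij : Commute zi zj := hij
  have comik : Commute zi zk := hik
  have comjk : Commute zj zk := hjk
  have cji : zj⁻¹ * zi⁻¹ = zi⁻¹ * zj⁻¹ := ((comij.inv_left).inv_right).eq.symm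
  have mji : ∀ w : X, zj⁻¹ * (zi⁻¹ * w) = zi⁻¹ * (zj⁻¹ * w) := by
    intro w; rw [← mul_assoc, cji, mul_assoc]
  have cki : zk * zi⁻¹ = zi⁻¹ * zk := (comik.inv_left).eq.symm
  have mki : ∀ w : X, zk * (zi⁻¹ * w) = zi⁻¹ * (zk * w) := by
    intro w; rw [← mul_assoc, cki, mul_assoc]
  have ckj : zk * zj⁻¹ = zj⁻¹ * zk := (comjk.inv_left).eq.symm
  have mkj : ∀ w : X, zk * (zj⁻¹ * w) = zj⁻¹ * (zk * w) := by
    intro w; rw [← mul_assoc, ckj, mul_assoc]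
  unfold sg
  rw [eright (dinv hDi h1) h1, eright (dinv hDj h1) h1]
  simp [mul_assoc, mji, cji, mki, cki, mkj, ckj, sub_eq_add_neg, add_assoc,
    neg_add_cancel_left, add_neg_cancel_left, neg_add_cancel, add_neg_cancel]

lemma threeprime (hb : ∀ a b c : X, a * (b + c) = a * b - a + a * c) (h1 : (1:X) = 0)
    {zi zj zk : X} (z y S x : X)
    (hpre : sg zj zk z y * zi⁻¹ - (z * y) * zi⁻¹ * zk
      = sg zi zk z S * zj⁻¹ - (z * S) * zj⁻¹ * zk) :
    sg zj zk z y * sg zi zk ((sg zj zk z y)⁻¹ * z * y) x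
      = sg zi zk z S * sg zj zk ((sg zi zk z S)⁻¹ * z * S) (S⁻¹ * y * x) := by
  rw [mul_assoc ((sg zj zk z y)⁻¹) z y, mul_assoc ((sg zi zk z S)⁻¹) z S,
    vsg hb h1, vsg hb h1]
  have hzs : (z * S) * (S⁻¹ * y * x) * zk = (z * y) * x * zk := by
    simp [mul_assoc, mul_inv_cancel_left]
  rw [hzs, hpre]

lemma weq (hb : ∀ a b c : X, a * (b + c) = a * b - a + a * c)
    {j' : X} (hcj : ∀ a : X, a + j' = j' + a) (c p a : X) :
    -(c * p) + c * a - c * j' = -(c * j') + c - c * p + c * a - c := by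
  have hcom : ∀ y : X, (-c + c * j') + (-c + c * y) = (-c + c * y) + (-c + c * j') := by
    intro y
    rw [← lamadd hb, ← lamadd hb, hcj y]
  have h1c : AddCommute (-c + c * j') (-c + c * p) := hcom p
  have h2c : AddCommute (-c + c * j') (-c + c * a) := hcom a
  have h3 : AddCommute (-c + c * j') (-(-c + c * p) + (-c + c * a)) :=
    (h1c.neg_right).add_right h2c
  have h4 := (h3.neg_left).eq
  rw [show c * p = c + (-c + c * p) from (add_neg_cancel_left _ _).symm,
      show c * a = c + (-c + c * a) from (add_neg_cancel_left _ _).symm,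
      show c * j' = c + (-c + c * j') from (add_neg_cancel_left _ _).symm]
  generalize (-c + c * p) = u at h4 ⊢
  generalize (-c + c * a) = v at h4 ⊢
  generalize (-c + c * j') = w at h4 ⊢
  have h5 : -w + (-u + (v + -c)) = -u + (v + (-w + -c)) := by
    rw [← add_assoc (-u) v (-c), ← add_assoc, h4]
    simp [add_assoc]
  simp [sub_eq_add_neg, neg_add_rev, add_assoc, neg_add_cancel_left, add_neg_cancel_left]
  rw [h5]

lemma conjsig (hb : ∀ a b c : X, a * (b + c) = a * b - a + a * c) (h1 : (1:X) = 0)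
    {zj zk : X}
    (hDk : ∀ a b : X, (a + b) * zk = a * zk - zk + b * zk)
    (hCk : ∀ a : X, a + zk = zk + a)
    (hCjinv : ∀ a : X, a + zj⁻¹ = zj⁻¹ + a)
    (c p a : X) :
    -(sg zj zk c p) + sg zj zk c a + sg zj zk c p = sg zj zk c (-p + a + p) := by
  have hstar : -(c * p * zk) + c * a * zk - c * zj⁻¹ * zk
      = -(c * zj⁻¹ * zk) + c * zk - c * p * zk + c * a * zk - c * zk := by
    have h' := congrArg (fun w => w * zk) (weq hb hCjinv c p a)
    rw [eneg3 hDk hCk h1, eneg5 hDk hCk h1] at h'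
    exact add_right_cancel h'
  have estep : c * (-p + a + p) = ((c - c * p + c) - c + c * a) - c + c * p := by
    rw [hb, hb, aneg hb h1]
  have estep2 : (((c - c * p + c) - c + c * a) - c + c * p) * zk
      = ((c * zk - (c * p) * zk + c * zk) - c * zk + (c * a) * zk) - c * zk + (c * p) * zk := by
    rw [eright hDk h1, eright hDk h1, eright hDk h1]
  unfold sg
  rw [estep, estep2]
  have hmvj : ∀ a b : X, a + (zj⁻¹ + b) = zj⁻¹ + (a + b) := by
    intro a b; rw [← add_assoc, hCjinv, add_assoc]
  have hncj := hnc_of hCjinv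
  have hmvnj : ∀ a b : X, a + (-zj⁻¹ + b) = -zj⁻¹ + (a + b) := by
    intro a b; rw [← add_assoc, hncj, add_assoc]
  have hstar2 := congrArg (fun w => w + c * p * zk) hstar
  simp only [sub_eq_add_neg, add_assoc] at hstar2
  simp only [sub_eq_add_neg, neg_add_rev, neg_neg, add_assoc]
  simp only [hmvj, hCjinv]
  simp only [hmvnj, hncj]
  simp only [add_assoc, neg_add_cancel_left, add_neg_cancel_left, neg_add_cancel,
    add_neg_cancel, add_zero, zero_add]
  rw [hstar2]

end Helpers

/-- for a skew left brace `(X, +, ∘)` and parameters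
`Y ⊆ D(X) ∩ Z(X,+)` with pairwise `∘`-commuting elements: `(X, ▷_{ij})` is a
p-rack, each `σ^{ij}_a` is bijective, `a ∘ b = σ^{ij}_a(b) ∘ τ^{ij}_b(a)`, the
admissible-twist conditions hold, and consequently
`R^{ij}(b,a) = (σ^{ij}_a(b), τ^{ij}_b(a))` is a solution of the parametric
set-theoretic Yang–Baxter equation. -/

theorem skew_brace_solution {X : Type*} [AddGroup X]
    (mul : X → X → X) (inv : X → X)
    (hassoc : ∀ a b c : X, mul (mul a b) c = mul a (mul b c))
    (hid : ∀ a : X, mul a 0 = a) (hid' : ∀ a : X, mul 0 a = a)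
    (hinv : ∀ a : X, mul a (inv a) = 0) (hinv' : ∀ a : X, mul (inv a) a = 0)
    (hbrace : ∀ a b c : X, mul a (b + c) = mul a b - a + mul a c)
    (Y : Set X)
    (hD : ∀ z ∈ Y, ∀ a b : X, mul (a + b) z = mul a z - z + mul b z)
    (hZ : ∀ z ∈ Y, ∀ a : X, a + z = z + a)
    (hcomm : ∀ z ∈ Y, ∀ w ∈ Y, mul z w = mul w z) :
    (IsPShelf (fun (i j : Y) (a b : X) => tri mul inv i j a b)
      ∧ ∀ (i j : Y) (a : X), Function.Bijective (tri mul inv i j a))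
    ∧ (∀ (i j : Y) (a : X), Function.Bijective (sig mul inv i j a))
    ∧ (∀ (i j : Y) (a b : X), mul a b = mul (sig mul inv i j a b) (tau mul inv i j b a))
    ∧ (∀ (i j k : Y) (a b c : X),
        sig mul inv i k a (sig mul inv i j b c)
          = sig mul inv i j (sig mul inv j k a b)
              (sig mul inv i k (tau mul inv j k b a) c))
    ∧ (∀ (i j k : Y) (a b c : X),
        tri mul inv i j (sig mul inv i k c b) (sig mul inv j k c a)
          = sig mul inv j k c (tri mul inv i j b a))
    ∧ IsYB (fun (i j : Y) (a b : X) => sig mul inv i j a b)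
        (fun (i j : Y) (b a : X) => tau mul inv i j b a) := by
  letI : Group X :=
    { mul := mul, mul_assoc := hassoc, one := 0, one_mul := hid', mul_one := hid,
      inv := inv, inv_mul_cancel := hinv' }
  have h1 : (1:X) = 0 := rfl
  have hm : ∀ a b : X, mul a b = a * b := fun _ _ => rfl
  have hb : ∀ a b c : X, a * (b + c) = a * b - a + a * c := hbrace
  have hsg : ∀ (i j : Y) (a b : X), sig mul inv i j a b = sg (↑i) (↑j) a b :=
    fun _ _ _ _ => rfl
  have htau : ∀ (i j : Y) (b a : X),
      tau mul inv i j b a = (sg (↑i) (↑j) a b)⁻¹ * a * b := fun _ _ _ _ => rfl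
  have htri : ∀ (i j : Y) (b a : X),
      tri mul inv i j b a = -(b * ↑i * (↑j : X)⁻¹) + a + b * ↑i * (↑j : X)⁻¹ :=
    fun _ _ _ _ => rfl
  have hDo : ∀ (i : Y) (a b : X), (a + b) * (↑i : X) = a * ↑i - ↑i + b * ↑i :=
    fun i => hD ↑i i.2
  have hCo : ∀ (i : Y) (a : X), a + (↑i : X) = ↑i + a := fun i => hZ ↑i i.2
  have hMo : ∀ (i j : Y), (↑i : X) * ↑j = ↑j * ↑i := fun i j => hcomm ↑i i.2 ↑j j.2
  have hCinv : ∀ (j : Y) (a : X), a + (↑j : X)⁻¹ = (↑j : X)⁻¹ + a :=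
    fun j => centinv (hDo j) (hCo j) h1
  have hstar : ∀ (i j k : Y) (u v : X),
      (-(u * ↑i * (↑j:X)⁻¹) + v + u * ↑i * (↑j:X)⁻¹) * ↑j * (↑k:X)⁻¹
        = -(u * ↑i * (↑k:X)⁻¹) + v * ↑j * (↑k:X)⁻¹ + u * ↑i * (↑k:X)⁻¹ := by
    intro i j k u v
    rw [econj (hDo j) (hCo j) h1, econj (dinv (hDo k) h1) (hCinv k) h1,
      inv_mul_cancel_right]
  have hcond4 : ∀ (i j k : Y) (a b c : X),
      sg (↑i) (↑k) a (sg (↑i) (↑j) b c)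
        = sg (↑i) (↑j) (sg (↑j) (↑k) a b)
            (sg (↑i) (↑k) ((sg (↑j) (↑k) a b)⁻¹ * a * b) c) := by
    intro i j k a b c
    rw [sgcomp hb h1 (hDo k), sgcomp hb h1 (hDo j)]
    rw [show sg (↑j) (↑k) a b * ((sg (↑j) (↑k) a b)⁻¹ * a * b) = a * b by
      simp [mul_assoc, mul_inv_cancel_left]]
    rw [hMo k j]
  refine ⟨⟨?_, ?_⟩, ?_, ?_, ?_, ?_, ?_⟩
  · -- p-shelf
    intro i j k a b c
    simp only [htri]
    rw [hstar i j k a b]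
    simp [sub_eq_add_neg, neg_add_rev, neg_neg, add_assoc, neg_add_cancel_left,
      add_neg_cancel_left, neg_add_cancel, add_neg_cancel]
  · -- tri bijective
    intro i j a
    refine Function.bijective_iff_has_inverse.mpr
      ⟨fun b => a * ↑i * (↑j:X)⁻¹ + b + -(a * ↑i * (↑j:X)⁻¹), ?_, ?_⟩
    · intro b
      simp [htri, add_assoc, neg_add_cancel_left, add_neg_cancel_left,
        neg_add_cancel, add_neg_cancel]
    · intro b
      simp [htri, add_assoc, neg_add_cancel_left, add_neg_cancel_left,
        neg_add_cancel, add_neg_cancel]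
  · -- sig bijective
    intro i j a
    refine Function.bijective_iff_has_inverse.mpr
      ⟨fun x => a⁻¹ * ((-((↑i:X)⁻¹ - a * (↑i:X)⁻¹ * ↑j) + x) * (↑j:X)⁻¹), ?_, ?_⟩
    · intro b
      simp only [hsg, sg]
      rw [neg_add_cancel_left, mul_inv_cancel_right, inv_mul_cancel_left]
    · intro b
      simp only [hsg, sg]
      rw [mul_inv_cancel_left, inv_mul_cancel_right, add_neg_cancel_left]
  · -- a∘b = σ∘τ
    intro i j a b
    simp only [hm, hsg, htau]
    simp [mul_assoc, mul_inv_cancel_left]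
  · -- condition 4
    intro i j k a b c
    simp only [hsg, htau]
    exact hcond4 i j k a b c
  · -- condition 5
    intro i j k a b c
    simp only [hsg, htri]
    rw [qlem h1 (hDo i) (hDo j) (hMo i k) (hMo j k) c b]
    exact conjsig hb h1 (hDo k) (hCo k) (hCinv j) c (b * ↑i * (↑j:X)⁻¹) a
  · -- Yang-Baxter
    intro i j k
    funext p
    obtain ⟨x, yy, z⟩ := p
    simp only [Function.comp_apply, R12, R13, R23, hsg, htau, Prod.mk.injEq]
    have hpre := prefixlem h1 (hDo i) (hDo j) (hMo i j) (hMo i k) (hMo j k)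
      z yy (sg (↑i) (↑j) yy x)
    have h3p := threeprime hb h1 z yy (sg (↑i) (↑j) yy x) x hpre
    have hc1 : sg (↑i) (↑j) (sg (↑j) (↑k) z yy)
        (sg (↑i) (↑k) ((sg (↑j) (↑k) z yy)⁻¹ * z * yy) x)
        = sg (↑i) (↑k) z (sg (↑i) (↑j) yy x) := (hcond4 i j k z yy x).symm
    refine ⟨?_, ?_, ?_⟩
    · exact hc1
    · rw [hc1, mul_assoc, h3p, inv_mul_cancel_left]
    · have hinv : (sg (↑i) (↑k) ((sg (↑j) (↑k) z yy)⁻¹ * z * yy) x)⁻¹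
          * (sg (↑j) (↑k) z yy)⁻¹
          = (sg (↑j) (↑k) ((sg (↑i) (↑k) z (sg (↑i) (↑j) yy x))⁻¹ * z
                * (sg (↑i) (↑j) yy x)) ((sg (↑i) (↑j) yy x)⁻¹ * yy * x))⁻¹
            * (sg (↑i) (↑k) z (sg (↑i) (↑j) yy x))⁻¹ := by
        rw [← mul_inv_rev, ← mul_inv_rev, h3p]
      calc (sg (↑i) (↑k) ((sg (↑j) (↑k) z yy)⁻¹ * z * yy) x)⁻¹
            * ((sg (↑j) (↑k) z yy)⁻¹ * z * yy) * x
          = ((sg (↑i) (↑k) ((sg (↑j) (↑k) z yy)⁻¹ * z * yy) x)⁻¹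
            * (sg (↑j) (↑k) z yy)⁻¹) * (z * (yy * x)) := by
            simp [mul_assoc]
        _ = _ := by rw [hinv]; simp [mul_assoc, mul_inv_cancel_left]


end Stmt14
end

section
/- Let (X, +_{ij}, ∘) be a p-brace with parameter group Y ≤ (X, ∘). Then, for all z_i, z_j ∈ Y, the structure (X, +_{ij}) is a quasigroup: for all a, b ∈ X there exist unique x, y ∈ X with x +_{ij} a = b and a +_{ij} y = b. In particular, for every z_i ∈ Y, (X, +_{z_i, 0}) is a quasigroup with left identity 0 and (X, +_{0, z_i}) is a quasigroup with right identity 0. -/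
namespace Stmt15

/-- A p-brace structure: binary operations `+_{ij} = add i j` on the group
`(X, ∘)` (written multiplicatively, identity `1` playing the role of `0`),
indexed by pairs of elements of the subgroup `Y`. -/
def IsPBrace {X : Type*} [Group X] {Y : Subgroup X} (add : Y → Y → X → X → X) : Prop :=
  (∀ (i j k : Y) (a b c : X),
      add k (i * j) (add i j a b) c = add (k * i) j a (add k i b c))
  ∧ (∀ (i j k : Y) (a b : X), add i (k * j) a b = add i (j * k) a b)
  ∧ (∀ (i j k : Y) (a b : X), add i (j * k) a b = add (j * k) i b a)
  ∧ (∀ (i : Y) (a : X), add i 1 1 a = a)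
  ∧ (∀ (i j : Y) (a : X), ∃! x : X, add i j a x = 1)
  ∧ (∀ (i j k : Y) (a b c : X),
      a * add k (i * j) b c = add k i (a * b) (a * add k j a⁻¹ c))

/-- in a p-brace, every `(X, +_{ij})` is a quasigroup; in
particular `(X, +_{z_i, 0})` has left identity `0` and `(X, +_{0, z_i})` has
right identity `0` (the group identity of `(X, ∘)`). -/
theorem pBrace_quasigroup {X : Type*} [Group X] {Y : Subgroup X}
    (add : Y → Y → X → X → X) (h : IsPBrace add) :
    (∀ (i j : Y) (a b : X),
        (∃! x : X, add i j x a = b) ∧ (∃! y : X, add i j a y = b))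
    ∧ (∀ (i : Y) (a : X), add i 1 1 a = a ∧ add 1 i a 1 = a) := by
  obtain ⟨h1, h2, h3, h4, h5, h6⟩ := h
  -- full commutativity with index swap
  have comm : ∀ (i j : Y) (a b : X), add i j a b = add j i b a := by
    intro i j a b
    have := h3 i j 1 a b
    simpa using this
  -- "associativity" of add k 1 over add 1 1
  have hT : ∀ (k : Y) (a b c : X),
      add k 1 (add 1 1 a b) c = add k 1 a (add k 1 b c) := by
    intro k a b c
    have := h1 1 1 k a b c
    simpa using this
  -- the maps c ↦ add k 1 a c are bijective
  have bijT : ∀ (k : Y) (a : X), Function.Bijective (fun c => add k 1 a c) := by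
    intro k a
    obtain ⟨n, hn, -⟩ := h5 1 1 a
    have hn' : add 1 1 n a = 1 := by rw [comm]; exact hn
    constructor
    · intro c c' hcc
      simp only at hcc
      have e1 : add k 1 n (add k 1 a c) = c := by rw [← hT, hn', h4]
      have e2 : add k 1 n (add k 1 a c') = c' := by rw [← hT, hn', h4]
      rw [← e1, ← e2, hcc]
    · intro d
      refine ⟨add k 1 n d, ?_⟩
      simp only
      rw [← hT, hn, h4]
  -- injectivity of every second-slot map
  have inj2 : ∀ (i j : Y) (a : X), Function.Injective (fun c => add i j a c) := by
    intro K J b c c' hcc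
    simp only at hcc
    have e := h1 J J⁻¹ K 1 b c
    have e' := h1 J J⁻¹ K 1 b c'
    rw [hcc, ← e'] at e
    have hJ : J * J⁻¹ = (1 : Y) := mul_inv_cancel J
    rw [hJ] at e
    exact (bijT K (add J J⁻¹ 1 b)).1 e
  -- surjectivity of every second-slot map
  have surj2 : ∀ (K J : Y) (a : X), Function.Surjective (fun c => add K J a c) := by
    intro K J a d
    obtain ⟨c, hc⟩ := (bijT (K * J) (add J⁻¹ J a 1)).2 d
    simp only at hc
    refine ⟨add (K * J) J⁻¹ 1 c, ?_⟩
    simp only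
    have e := h1 J⁻¹ J (K * J) a 1 c
    have h1' : J⁻¹ * J = (1 : Y) := inv_mul_cancel J
    have h2' : K * J * J⁻¹ = K := by group
    rw [h1', h2'] at e
    rw [← e, hc]
  refine ⟨fun i j a b => ⟨?_, ?_⟩, fun i a => ⟨h4 i a, by rw [comm]; exact h4 i a⟩⟩
  · obtain ⟨y, hy⟩ := surj2 j i a b
    simp only at hy
    refine ⟨y, show add i j y a = b by rw [comm]; exact hy, ?_⟩
    intro x hx
    apply inj2 j i a
    show add j i a x = add j i a y
    rw [← comm, hx, ← hy]
  · obtain ⟨y, hy⟩ := surj2 i j a b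
    simp only at hy
    refine ⟨y, hy, ?_⟩
    intro y' hy'
    exact inj2 i j a (show add i j a y' = add i j a y from hy'.trans hy.symm)

end Stmt15
end

section
/- Let (X, ∘) be a group with identity 0 and Y a subgroup of (X, ∘), and let η : Y × Y × X → Sym(X), (z_i, z_j, a) ↦ η^{ij}_a, be a reversible p-affine structure, i.e. each η^{ij}_a is a bijection of X and, for all a, b ∈ X and z_i, z_j, z_k ∈ Y: η^{z_i, z_j∘z_k}_{a∘b} = η^{z_i,z_j}_b ∘ η^{z_i,z_k}_a = η^{z_i, z_k∘z_j}_{a∘b}, and a ∘ η^{z_i,z_j}_a(b) = b ∘ η^{z_j,z_i}_b(a). Define a +_{ij} b := a ∘ η^{ij}_a(b). Then: (1) (X, +_{ij}, ∘) is a p-brace; and (2) the maps σ^{ij}_a := (η^{ij}_a)^{-1} and τ^{ij}_b(a) := σ^{ij}_a(b)^{-1} ∘ a ∘ b determine a reversible solution R^{ij}(b, a) = (σ^{ij}_a(b), τ^{ij}_b(a)) of the parametric set-theoretic Yang–Baxter equation, i.e. R is a solution and R_{21}^{ji} ∘ R_{12}^{ij} = id_{X×X}. -/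
namespace Stmt16

variable {X P : Type*}

/-- `R_{12}` acting on the first two factors of `X × X × X`, where
`R^{ij}(b,a) = (σ^{ij}_a(b), τ^{ij}_b(a))`. -/
def R12 (σ τ : P → P → X → X → X) (i j : P) : X × X × X → X × X × X :=
  fun p => (σ i j p.2.1 p.1, τ i j p.1 p.2.1, p.2.2)

def R13 (σ τ : P → P → X → X → X) (i j : P) : X × X × X → X × X × X :=
  fun p => (σ i j p.2.2 p.1, p.2.1, τ i j p.1 p.2.2)

def R23 (σ τ : P → P → X → X → X) (i j : P) : X × X × X → X × X × X :=
  fun p => (p.1, σ i j p.2.2 p.2.1, τ i j p.2.1 p.2.2)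

/-- The parametric set-theoretic Yang–Baxter equation. -/
def IsYB (σ τ : P → P → X → X → X) : Prop :=
  ∀ i j k : P,
    R12 σ τ i j ∘ R13 σ τ i k ∘ R23 σ τ j k
      = R23 σ τ j k ∘ R13 σ τ i k ∘ R12 σ τ i j

/-- The map `R^{ij} : X × X → X × X`, `R^{ij}(b, a) = (σ^{ij}_a(b), τ^{ij}_b(a))`. -/
def Rm (σ τ : P → P → X → X → X) (i j : P) : X × X → X × X :=
  fun p => (σ i j p.2 p.1, τ i j p.1 p.2)

/-- A p-brace structure: binary operations `+_{ij} = add i j` on the group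
`(X, ∘)` (written multiplicatively, identity `1` playing the role of `0`),
indexed by pairs of elements of the subgroup `Y`. -/
def IsPBrace {X : Type*} [Group X] {Y : Subgroup X} (add : Y → Y → X → X → X) : Prop :=
  (∀ (i j k : Y) (a b c : X),
      add k (i * j) (add i j a b) c = add (k * i) j a (add k i b c))
  ∧ (∀ (i j k : Y) (a b : X), add i (k * j) a b = add i (j * k) a b)
  ∧ (∀ (i j k : Y) (a b : X), add i (j * k) a b = add (j * k) i b a)
  ∧ (∀ (i : Y) (a : X), add i 1 1 a = a)
  ∧ (∀ (i j : Y) (a : X), ∃! x : X, add i j a x = 1)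
  ∧ (∀ (i j k : Y) (a b c : X),
      a * add k (i * j) b c = add k i (a * b) (a * add k j a⁻¹ c))

/-- a reversible p-affine structure `η` on the group `(X, ∘)`
yields a p-brace via `a +_{ij} b := a ∘ η^{ij}_a(b)`, and the maps
`σ^{ij}_a := (η^{ij}_a)⁻¹`, `τ^{ij}_b(a) := σ^{ij}_a(b)⁻¹ ∘ a ∘ b` determine a
reversible solution of the parametric set-theoretic Yang–Baxter equation. -/
theorem reversible_pAffine_to_pBrace {X : Type*} [Group X] {Y : Subgroup X}
    (η : Y → Y → X → X ≃ X)
    (hA : ∀ (i j k : Y) (a b x : X), η i (j * k) (a * b) x = η i j b (η i k a x))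
    (hA' : ∀ (i j k : Y) (a b x : X), η i (j * k) (a * b) x = η i (k * j) (a * b) x)
    (hrev : ∀ (i j : Y) (a b : X), a * η i j a b = b * η j i b a) :
    IsPBrace (fun (i j : Y) (a b : X) => a * η i j a b)
    ∧ IsYB (fun (i j : Y) (a b : X) => (η i j a).symm b)
        (fun (i j : Y) (b a : X) => ((η i j a).symm b)⁻¹ * a * b)
    ∧ ∀ i j : Y,
        (Prod.swap ∘ Rm (fun (i j : Y) (a b : X) => (η i j a).symm b)
              (fun (i j : Y) (b a : X) => ((η i j a).symm b)⁻¹ * a * b) j i ∘ Prod.swap)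
          ∘ Rm (fun (i j : Y) (a b : X) => (η i j a).symm b)
              (fun (i j : Y) (b a : X) => ((η i j a).symm b)⁻¹ * a * b) i j
        = id := by
  have hid : ∀ (i : Y) (x : X), η i 1 1 x = x := by
    intro i x
    have h := hA i 1 1 1 1 x
    simp only [mul_one] at h
    exact ((η i 1 1).injective h).symm
  refine ⟨⟨?_, ?_, ?_, ?_, ?_, ?_⟩, ?_, ?_⟩
  · -- brace axiom (1)
    intro i j k a b c
    show (a * η i j a b) * η k (i*j) (a * η i j a b) c
        = a * η (k*i) j a (b * η k i b c)
    rw [hrev i j a b]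
    rw [← hA' k j i b (η j i b a) c, hA k j i b (η j i b a) c]
    rw [mul_assoc]
    rw [hrev k j (η j i b a) (η k i b c)]
    rw [← hA j k i b (η k i b c) a]
    rw [← mul_assoc]
    rw [← hrev (k*i) j a (b * η k i b c)]
  · -- (2a)
    intro i j k a b
    show a * η i (k*j) a b = a * η i (j*k) a b
    have h := hA' i k j a 1 b
    rw [mul_one] at h
    rw [h]
  · -- (2b)
    intro i j k a b
    exact hrev i (j*k) a b
  · -- (3)
    intro i a
    show 1 * η i 1 1 a = a
    rw [one_mul, hid]
  · -- (5)
    intro i j a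
    refine ⟨(η i j a).symm a⁻¹, ?_, ?_⟩
    · show a * η i j a ((η i j a).symm a⁻¹) = 1
      simp
    · intro y hy
      have h : η i j a y = a⁻¹ := (inv_eq_of_mul_eq_one_right hy).symm
      rw [← h]
      exact ((η i j a).symm_apply_apply y).symm
  · -- (6)
    intro i j k a b c
    show a * (b * η k (i*j) b c) = (a*b) * η k i (a*b) (a * (a⁻¹ * η k j a⁻¹ c))
    rw [mul_inv_cancel_left]
    rw [← hA k i j a⁻¹ (a*b) c]
    rw [inv_mul_cancel_left, mul_assoc]
  · -- YBE
    intro i j k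
    funext p
    obtain ⟨x, y, z⟩ := p
    simp only [R12, R13, R23, Function.comp_apply]
    set S := (η j k z).symm y with hS
    have hSy : η j k z S = y := (η j k z).apply_symm_apply y
    set T := S⁻¹ * z * y with hT
    set U := (η i j y).symm x with hU
    have hUx : η i j y U = x := (η i j y).apply_symm_apply x
    set A := (η i k T).symm x with hA0
    have hAx : η i k T A = x := (η i k T).apply_symm_apply x
    set B := (η i k z).symm U with hB
    have hBU : η i k z B = U := (η i k z).apply_symm_apply U
    set V := U⁻¹ * y * x with hV
    set W := B⁻¹ * z * U with hW
    have hST : S * T = z * y := by rw [hT]; group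
    have key : η i j S B = A := by
      apply (η i k T).injective
      rw [hAx, ← hA i k j S T B, ← hA' i j k S T B, hST, hA i j k z y B, hBU, hUx]
    have C1 : (η i j S).symm A = B := by
      rw [← key, (η i j S).symm_apply_apply]
    have hq : B⁻¹ * S * A = η j i B S := by
      have h := hrev i j S B
      rw [key] at h
      rw [mul_assoc, h]
      group
    have hw : W = η k i B z := by
      have h := hrev i k z B
      rw [hBU] at h
      rw [hW, mul_assoc, h]
      group
    have hBW : B * W = z * U := by
      have h := hrev i k z B
      rw [hBU] at h
      rw [hw, ← h]
    have hVy : η j i U y = V := by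
      have h := hrev i j y U
      rw [hUx] at h
      rw [hV, mul_assoc, h]
      group
    have C2 : (η j k W).symm V = B⁻¹ * S * A := by
      have h2 : η j k W (B⁻¹ * S * A) = V := by
        rw [hq, ← hA j k i B W S, hBW, ← hA' j i k z U S, hA j i k z U S, hSy, hVy]
      rw [← h2, (η j k W).symm_apply_apply]
    rw [Prod.mk.injEq, Prod.mk.injEq]
    refine ⟨C1, ?_, ?_⟩
    · rw [C1, C2]
    · rw [C2, hV, hW, hT]
      group
  · -- reversibility
    intro i j
    funext p
    obtain ⟨b, a⟩ := p
    simp only [Rm, Function.comp_apply, Prod.swap_prod_mk, id_eq]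
    set s := (η i j a).symm b with hs
    have hb : η i j a s = b := (η i j a).apply_symm_apply b
    have key : η j i s a = s⁻¹ * a * b := by
      have h := hrev i j a s
      rw [hb] at h
      rw [mul_assoc, h]
      group
    have k2 : (η j i s).symm (s⁻¹ * a * b) = a := by
      rw [← key, (η j i s).symm_apply_apply]
    rw [k2, Prod.mk.injEq]
    refine ⟨?_, rfl⟩
    group

end Stmt16
end

section
/- Let (X, ∘) be a group with identity 0 and Y a subgroup of (X, ∘), and let η : Y × Y × X → Sym(X), (z_i, z_j, a) ↦ η^{ij}_a, be a p-affine structure, i.e. each η^{ij}_a is a bijection of X and, for all a, b, c ∈ X and z_i, z_j, z_k ∈ Y: (A1) η^{z_i, z_j∘z_k}_{a∘b} = η^{z_i,z_j}_b ∘ η^{z_i,z_k}_a = η^{z_i, z_k∘z_j}_{a∘b}; (A2) η^{0, z_j}_a(0) = 0; (A3) η^{z_i∘z_j, z_k}_a = η^{z_j∘z_i, z_k}_a; (A4) η^{z_k∘z_j, z_i}_a(b ∘ η^{z_k,z_j}_b(c)) = η^{z_j,z_i}_a(b) ∘ η^{z_k,z_i}_{η^{z_j,z_i}_a(b)}(η^{z_k,z_j}_a(c)).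 Define a +_{ij} b := a ∘ η^{ij}_a(b). Then (X, +_{ij}, ∘) is a skew p-brace. -/
namespace Stmt18

/-- A skew p-brace structure: binary operations `+_{ij} = add i j` on the group
`(X, ∘)` (written multiplicatively, identity `1` playing the role of `0`),
indexed by pairs of elements of the subgroup `Y`. -/
def IsSkewPBrace {X : Type*} [Group X] {Y : Subgroup X} (add : Y → Y → X → X → X) : Prop :=
  (∀ (i j k : Y) (a b c : X),
      add k (i * j) (add i j a b) c = add (k * i) j a (add k i b c))
  ∧ (∀ (i j k : Y) (a b : X), add i (j * k) a b = add i (k * j) a b)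
  ∧ (∀ (i : Y) (a : X), add 1 i a 1 = a)
  ∧ (∀ (i : Y) (a : X), add i 1 1 a = a)
  ∧ (∀ (i j : Y) (a : X), (∃! x : X, add i j a x = 1) ∧ (∃! y : X, add i j y a = 1))
  ∧ (∀ (i j k : Y) (a b c : X),
      a * add k (i * j) b c = add k i (a * b) (a * add k j a⁻¹ c))

section Aux

variable {X : Type*} [Group X] {Y : Subgroup X} (η : Y → Y → X → X ≃ X)
variable (hA1 : ∀ (i j k : Y) (a b x : X), η i (j * k) (a * b) x = η i j b (η i k a x))
variable (hA2 : ∀ (j : Y) (a : X), η 1 j a 1 = 1)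
variable (hA3 : ∀ (i j k : Y) (a x : X), η (i * j) k a x = η (j * i) k a x)
variable (hA4 : ∀ (i j k : Y) (a b c : X),
    η (k * j) i a (b * η k j b c) = η j i a b * η k i (η j i a b) (η k j a c))

include hA1 in
lemma eta_one_one : ∀ (i : Y) (x : X), η i 1 1 x = x := by
  intro i x
  have h := hA1 i 1 1 1 1 x
  simp only [one_mul, mul_one] at h
  exact ((η i 1 1).injective h).symm

include hA1 hA2 hA3 hA4 in
lemma exists_unique_left (i j : Y) (a : X) : ∃! y : X, y * η i j y a = 1 := by
  set op : X × Y → X × Y → X × Y :=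
    fun p q => (p.1 * η q.2 p.2 p.1 q.1, p.2 * q.2) with hop
  have e1 := eta_one_one η hA1
  have hassoc : ∀ p q r : X × Y, op (op p q) r = op p (op q r) := by
    rintro ⟨a, m⟩ ⟨b, n⟩ ⟨c, p⟩
    simp only [hop]
    refine Prod.ext ?_ (mul_assoc m n p)
    show (a * η n m a b) * η p (m * n) (a * η n m a b) c
        = a * η (n * p) m a (b * η p n b c)
    rw [hA3 n p m, hA4 m n p a b c, hA1 p m n a (η n m a b) c, mul_assoc]
  have h_one_op : ∀ p : X × Y, op (1, 1) p = p := by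
    rintro ⟨b, n⟩
    simp only [hop, one_mul, e1]
  have h_op_one : ∀ p : X × Y, op p (1, 1) = p := by
    rintro ⟨a, m⟩
    simp only [hop, hA2, mul_one]
  have hrinv : ∀ p : X × Y, ∃ q, op p q = (1, 1) := by
    rintro ⟨a, m⟩
    refine ⟨((η m⁻¹ m a).symm a⁻¹, m⁻¹), ?_⟩
    simp only [hop, Equiv.apply_symm_apply, mul_inv_cancel, Prod.mk.injEq]
  -- two-sided inverse
  have hinv : ∀ p : X × Y, ∃ q, op p q = (1, 1) ∧ op q p = (1, 1) := by
    intro p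
    obtain ⟨q, hq⟩ := hrinv p
    obtain ⟨r, hr⟩ := hrinv q
    have hqp : op q p = (1, 1) := by
      have : op (op q p) (op q r) = (1, 1) := by
        rw [← hassoc, hassoc q p q, hq, h_op_one, hr]
      rw [hr, h_op_one] at this
      exact this
    exact ⟨q, hq, hqp⟩
  obtain ⟨q, hq1, hq2⟩ := hinv (a, i)
  have hq2' : q.2 = i⁻¹ := by
    have := congrArg Prod.snd hq1
    simp only [hop] at this
    exact eq_inv_of_mul_eq_one_right this
  -- candidate
  set g := op (1, j * i) q with hg
  have hgq : op g (a, i) = (1, j * i) := by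
    rw [hg, hassoc, hq2, h_op_one]
  have hg2 : g.2 = j := by
    simp only [hg, hop, hq2']
    group
  refine ⟨g.1, ?_, ?_⟩
  · have := congrArg Prod.fst hgq
    simp only [hop] at this
    rw [← hg2]
    exact this
  · intro y hy
    have hyop : op (y, j) (a, i) = (1, j * i) := by
      show (y * η i j y a, j * i) = (1, j * i)
      rw [hy]
    have : op (op (y, j) (a, i)) q = op (op (g.1, j) (a, i)) q := by
      rw [hyop]
      have : (g.1, j) = g := by rw [← hg2]
      rw [this, hgq]
    rw [hassoc, hassoc, hq1, h_op_one, h_op_one] at this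
    exact (Prod.mk.injEq _ _ _ _ ▸ this).1

end Aux

/-- a p-affine structure `η` on the group `(X, ∘)` (axioms
(A1)–(A4)) yields a skew p-brace via `a +_{ij} b := a ∘ η^{ij}_a(b)`. -/
theorem pAffine_to_skewPBrace {X : Type*} [Group X] {Y : Subgroup X}
    (η : Y → Y → X → X ≃ X)
    (hA1 : ∀ (i j k : Y) (a b x : X), η i (j * k) (a * b) x = η i j b (η i k a x))
    (hA1' : ∀ (i j k : Y) (a b x : X), η i (j * k) (a * b) x = η i (k * j) (a * b) x)
    (hA2 : ∀ (j : Y) (a : X), η 1 j a 1 = 1)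
    (hA3 : ∀ (i j k : Y) (a x : X), η (i * j) k a x = η (j * i) k a x)
    (hA4 : ∀ (i j k : Y) (a b c : X),
        η (k * j) i a (b * η k j b c)
          = η j i a b * η k i (η j i a b) (η k j a c)) :
    IsSkewPBrace (fun (i j : Y) (a b : X) => a * η i j a b) := by
  have e1 := eta_one_one η hA1
  refine ⟨?_, ?_, ?_, ?_, ?_, ?_⟩
  · intro i j k a b c
    show (a * η i j a b) * η k (i * j) (a * η i j a b) c
        = a * η (k * i) j a (b * η k i b c)
    have h1 : η k (i * j) (a * η i j a b) c = η k j (η i j a b) (η k i a c) := by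
      rw [hA1' k i j, hA1 k j i a _ c]
    rw [h1, hA4 j i k a b c, mul_assoc]
  · intro i j k a b
    show a * η i (j * k) a b = a * η i (k * j) a b
    have h := hA1' i j k a 1 b
    simpa using h
  · intro i a
    show a * η 1 i a 1 = a
    rw [hA2, mul_one]
  · intro i a
    show 1 * η i 1 1 a = a
    rw [e1, one_mul]
  · intro i j a
    constructor
    · refine ⟨(η i j a).symm a⁻¹, by simp, fun x hx => ?_⟩
      have hx2 : η i j a x = a⁻¹ := eq_inv_of_mul_eq_one_right hx
      exact (η i j a).eq_symm_apply.mpr hx2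
    · exact exists_unique_left η hA1 hA2 hA3 hA4 i j a
  · intro i j k a b c
    show a * (b * η k (i * j) b c) = (a * b) * η k i (a * b) (a * (a⁻¹ * η k j a⁻¹ c))
    have h := hA1 k i j a⁻¹ (a * b) c
    simp only [inv_mul_cancel_left] at h
    rw [h, mul_inv_cancel_left, mul_assoc]


end Stmt18
end

section
/- Let (X, ∘) be a group with identity 0 and Y a subgroup of (X, ∘), and let η : Y × Y × X → Sym(X), (z_i, z_j, a) ↦ η^{ij}_a, be a p-affine structure, i.e. each η^{ij}_a is a bijection of X and, for all a, b, c ∈ X and z_i, z_j, z_k ∈ Y: (A1) η^{z_i, z_j∘z_k}_{a∘b} = η^{z_i,z_j}_b ∘ η^{z_i,z_k}_a = η^{z_i, z_k∘z_j}_{a∘b}; (A2) η^{0, z_j}_a(0) = 0; (A3) η^{z_i∘z_j, z_k}_a = η^{z_j∘z_i, z_k}_a; (A4) η^{z_k∘z_j, z_i}_a(b ∘ η^{z_k,z_j}_b(c)) = η^{z_j,z_i}_a(b) ∘ η^{z_k,z_i}_{η^{z_j,z_i}_a(b)}(η^{z_k,z_j}_a(c)). Then the maps σ^{ij}_a :=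 (η^{ij}_a)^{-1} and τ^{ij}_b(a) := σ^{ij}_a(b)^{-1} ∘ a ∘ b determine a solution R^{ij}(b, a) = (σ^{ij}_a(b), τ^{ij}_b(a)) of the parametric set-theoretic Yang–Baxter equation on X. -/
namespace Stmt19

variable {X P : Type*}

/-- `R_{12}` acting on the first two factors of `X × X × X`, where
`R^{ij}(b,a) = (σ^{ij}_a(b), τ^{ij}_b(a))`. -/
def R12 (σ τ : P → P → X → X → X) (i j : P) : X × X × X → X × X × X :=
  fun p => (σ i j p.2.1 p.1, τ i j p.1 p.2.1, p.2.2)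

def R13 (σ τ : P → P → X → X → X) (i j : P) : X × X × X → X × X × X :=
  fun p => (σ i j p.2.2 p.1, p.2.1, τ i j p.1 p.2.2)

def R23 (σ τ : P → P → X → X → X) (i j : P) : X × X × X → X × X × X :=
  fun p => (p.1, σ i j p.2.2 p.2.1, τ i j p.2.1 p.2.2)

/-- The parametric set-theoretic Yang–Baxter equation. -/
def IsYB (σ τ : P → P → X → X → X) : Prop :=
  ∀ i j k : P,
    R12 σ τ i j ∘ R13 σ τ i k ∘ R23 σ τ j k
      = R23 σ τ j k ∘ R13 σ τ i k ∘ R12 σ τ i j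

/-- a p-affine structure `η` on the group `(X, ∘)` (axioms
(A1)–(A4)) determines, via `σ^{ij}_a := (η^{ij}_a)⁻¹` and
`τ^{ij}_b(a) := σ^{ij}_a(b)⁻¹ ∘ a ∘ b`, a solution
`R^{ij}(b,a) = (σ^{ij}_a(b), τ^{ij}_b(a))` of the parametric set-theoretic
Yang–Baxter equation. -/
theorem pAffine_to_solution {X : Type*} [Group X] {Y : Subgroup X}
    (η : Y → Y → X → X ≃ X)
    (hA1 : ∀ (i j k : Y) (a b x : X), η i (j * k) (a * b) x = η i j b (η i k a x))
    (hA1' : ∀ (i j k : Y) (a b x : X), η i (j * k) (a * b) x = η i (k * j) (a * b) x)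
    (hA2 : ∀ (j : Y) (a : X), η 1 j a 1 = 1)
    (hA3 : ∀ (i j k : Y) (a x : X), η (i * j) k a x = η (j * i) k a x)
    (hA4 : ∀ (i j k : Y) (a b c : X),
        η (k * j) i a (b * η k j b c)
          = η j i a b * η k i (η j i a b) (η k j a c)) :
    IsYB (fun (i j : Y) (a b : X) => (η i j a).symm b)
        (fun (i j : Y) (b a : X) => ((η i j a).symm b)⁻¹ * a * b) := by
  -- composition lemmas for the inverse maps, from (A1) and (A1')
  have L1 : ∀ (i j k : Y) (a b x : X),
      (η i k a).symm ((η i j b).symm x) = (η i (j * k) (a * b)).symm x := by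
    intro i j k a b x
    rw [Equiv.symm_apply_eq, Equiv.symm_apply_eq, ← hA1, Equiv.apply_symm_apply]
  have L2 : ∀ (i j k : Y) (a b x : X),
      (η i j a).symm ((η i k b).symm x) = (η i (j * k) (a * b)).symm x := by
    intro i j k a b x
    rw [Equiv.symm_apply_eq, Equiv.symm_apply_eq, ← hA1 i k j a b,
      ← hA1' i j k a b, Equiv.apply_symm_apply]
  intro i j k
  funext p
  obtain ⟨c, b, a⟩ := p
  simp only [R12, R13, R23, Function.comp_apply]
  set cp := (η i j b).symm c with hcp
  set tp := cp⁻¹ * b * c with htp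
  set V := (η i k a).symm cp with hV
  set a' := V⁻¹ * a * cp with ha'
  set U := (η j k a').symm tp with hU
  set Yb := (η j k a).symm b with hYb
  set t := Yb⁻¹ * a * b with ht
  set Xx := (η i k t).symm c with hXx
  -- E1 : first components agree
  have hVc2 : V = (η i (j * k) (a * b)).symm c := by rw [hV, hcp, L1]
  have hYt : Yb * t = a * b := by rw [ht]; group
  have h1 : (η i j Yb).symm Xx = V := by
    rw [hXx, L2, hYt, hVc2]
  -- key identity : Yb * Xx = V * U
  have claimA : η (i * j) k a (Yb * Xx) = b * c := by
    have hXV : Xx = η i j Yb V := by rw [← h1, Equiv.apply_symm_apply]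
    rw [hXV, hA4 k j i a Yb V, hYb, Equiv.apply_symm_apply,
      ← hA1 i k j a b V, ← hA1' i j k a b V, hVc2, Equiv.apply_symm_apply]
  have claimB : η (i * j) k a (V * U) = b * c := by
    have hq : U = η j i V ((η j (i * k) (V * a')).symm tp) := by
      rw [hU, ← L2 j i k V a' tp, Equiv.apply_symm_apply]
    have hVc : η i k a V = cp := by rw [hV, Equiv.apply_symm_apply]
    have hVa : V * a' = a * cp := by rw [ha']; group
    rw [hq, hA3 i j k a, hA4 k i j a V _, hVc,
      ← hA1 j k i a cp _, hA1' j k i a cp _, ← hVa, Equiv.apply_symm_apply,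
      htp]
    group
  have hKey : Yb * Xx = V * U :=
    (η (i * j) k a).injective (claimA.trans claimB.symm)
  -- E2 : second components agree
  have h2 : ((η i j Yb).symm Xx)⁻¹ * Yb * Xx = U := by
    rw [h1]
    calc V⁻¹ * Yb * Xx = V⁻¹ * (Yb * Xx) := by group
      _ = V⁻¹ * (V * U) := by rw [hKey]
      _ = U := by group
  -- E3 : third components agree
  have hU2 : U = V⁻¹ * (Yb * Xx) := by rw [hKey]; group
  have h3 : Xx⁻¹ * t * c = U⁻¹ * a' * tp := by
    rw [hU2, ht, ha', htp]; group
  exact Prod.ext h1 (Prod.ext h2 h3)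

end Stmt19
end
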